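/- arXiv:0904.3871 — 8 statements merged into one kernel-verified Lean document; each statement's English description precedes it below -/
import Mathlib

section
/- Let ψ : [−1,∞) → ℝ be continuous and convex with ψ(0) = 0 and ψ(θ) → ∞ as θ → ∞, let α, β, K > 0, and let Φ(q) = sup{θ ≥ 0 : ψ(θ) = q} for q > 0. Then for every q with max(β + ψ(−1), 0) < q ≤ α/K one has a*(q) := α(Φ(q)+1)/(Φ(q)(q − ψ(−1) − β)) > K; in particular q·(Φ(q)+1) ≥ Φ(q)(q − ψ(−1)) holds for all q > 0, and the unique root q₀ of a*(q₀) = K satisfies q₀ > α/K. -/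
open MeasureTheory Real Set Filter

/-- For max(β+ψ(−1),0) < q ≤ α/K one has a*(q) > K; the inequality
q(Φ(q)+1) ≥ Φ(q)(q − ψ(−1)) holds for all q > 0; and any root q₀ of a*(q₀) = K
in (max(β+ψ(−1),0), ∞) satisfies q₀ > α/K. -/
theorem stmt_7 (ψ : ℝ → ℝ)
    (hcont : ContinuousOn ψ (Set.Ici (-1:ℝ)))
    (hconv : ConvexOn ℝ (Set.Ici (-1:ℝ)) ψ)
    (h0 : ψ 0 = 0)
    (htop : Tendsto ψ atTop atTop)
    (α β K : ℝ) (hα : 0 < α) (hβ : 0 < β) (hK : 0 < K)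
    (Φ astar : ℝ → ℝ)
    (hΦ : ∀ q : ℝ, Φ q = sSup {θ : ℝ | 0 ≤ θ ∧ ψ θ = q})
    (hastar : ∀ q : ℝ, astar q = α * (Φ q + 1) / (Φ q * (q - ψ (-1) - β))) :
    (∀ q : ℝ, max (β + ψ (-1)) 0 < q → q ≤ α / K → K < astar q) ∧
    (∀ q : ℝ, 0 < q → Φ q * (q - ψ (-1)) ≤ q * (Φ q + 1)) ∧
    (∀ q₀ : ℝ, q₀ ∈ Set.Ioi (max (β + ψ (-1)) 0) → astar q₀ = K → α / K < q₀) := by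
  -- key facts about Φ for q > 0
  have key : ∀ q : ℝ, 0 < q → 0 < Φ q ∧ ψ (Φ q) = q ∧ 0 ≤ Φ q * ψ (-1) + q := by
    intro q hq
    set S : Set ℝ := {θ : ℝ | 0 ≤ θ ∧ ψ θ = q} with hS
    -- bounded above
    obtain ⟨T, hT⟩ := (htop.eventually (eventually_gt_atTop q)).exists_forall_of_atTop
    have hbdd : BddAbove S := by
      refine ⟨T, fun x hx => ?_⟩
      by_contra hxT
      exact absurd hx.2 (ne_of_gt (hT x (le_of_not_ge hxT)))
    -- nonempty via IVT
    have hne : S.Nonempty := by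
      set T' : ℝ := max T 0 with hT'
      have hψT' : q ≤ ψ T' := (hT T' (le_max_left _ _)).le
      have hsub : Set.Icc (0:ℝ) T' ⊆ Set.Ici (-1:ℝ) := fun x hx => le_trans (by norm_num) hx.1
      have := intermediate_value_Icc (le_max_right T 0) (hcont.mono hsub)
      have hqmem : q ∈ ψ '' Set.Icc 0 T' := this ⟨by rw [h0]; exact hq.le, hψT'⟩
      obtain ⟨x, hx, hxq⟩ := hqmem
      exact ⟨x, hx.1, hxq⟩
    -- closed
    have hclosed : IsClosed S := by
      have : S = Set.Ici (0:ℝ) ∩ ψ ⁻¹' {q} := by ext x; simp [hS, Set.mem_setOf_eq]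
      rw [this]
      exact ContinuousOn.preimage_isClosed_of_isClosed
        (hcont.mono (fun x hx => le_trans (by norm_num : (-1:ℝ) ≤ 0) hx)) isClosed_Ici isClosed_singleton
    have hmem : Φ q ∈ S := by rw [hΦ q]; exact hclosed.csSup_mem hne hbdd
    have hΦ0 : 0 ≤ Φ q := hmem.1
    have hψΦ : ψ (Φ q) = q := hmem.2
    have hΦpos : 0 < Φ q := by
      rcases lt_or_eq_of_le hΦ0 with h | h
      · exact h
      · exfalso; rw [← h, h0] at hψΦ; linarith
    refine ⟨hΦpos, hψΦ, ?_⟩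
    -- chord inequality from convexity at -1, 0, Φ q
    have hd : (0:ℝ) < Φ q + 1 := by linarith
    have hcomb := hconv.2 (Set.mem_Ici.mpr (le_refl (-1:ℝ)))
      (Set.mem_Ici.mpr (le_trans (by norm_num) hΦ0))
      (div_nonneg hΦpos.le hd.le) (div_nonneg one_pos.le hd.le)
      (by field_simp)
    have hzero : (Φ q / (Φ q + 1)) • (-1:ℝ) + (1 / (Φ q + 1)) • Φ q = 0 := by
      simp only [smul_eq_mul]
      field_simp
      ring
    rw [hzero, h0, smul_eq_mul, smul_eq_mul, hψΦ] at hcomb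
    have : 0 ≤ Φ q * ψ (-1) + q := by
      have := mul_le_mul_of_nonneg_left hcomb hd.le
      field_simp at this
      linarith
    exact this
  -- second part
  have part2 : ∀ q : ℝ, 0 < q → Φ q * (q - ψ (-1)) ≤ q * (Φ q + 1) := by
    intro q hq
    obtain ⟨hΦpos, _, hchord⟩ := key q hq
    nlinarith
  -- first part
  have part1 : ∀ q : ℝ, max (β + ψ (-1)) 0 < q → q ≤ α / K → K < astar q := by
    intro q hq1 hq2
    have hq : 0 < q := lt_of_le_of_lt (le_max_right _ _) hq1
    have hqβ : β + ψ (-1) < q := lt_of_le_of_lt (le_max_left _ _) hq1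
    obtain ⟨hΦpos, _, hchord⟩ := key q hq
    have hden : 0 < Φ q * (q - ψ (-1) - β) := mul_pos hΦpos (by linarith)
    rw [hastar q, lt_div_iff₀ hden]
    have h1 : Φ q * (q - ψ (-1)) ≤ q * (Φ q + 1) := part2 q hq
    have h2 : q * K ≤ α := (le_div_iff₀ hK).mp hq2
    nlinarith [mul_pos hΦpos hβ]
  refine ⟨part1, part2, ?_⟩
  intro q₀ hq₀ hroot
  by_contra h
  push_neg at h
  exact absurd hroot (ne_of_gt (part1 q₀ hq₀ h))
end

section
/- Let Π be a measure on ℝ concentrated on (0,∞) satisfying ∫_{(0,∞)} min(1, x²) Π(dx) < ∞ and ∫_{[1,∞)} e^{x} Π(dx) < ∞, and let φ > 0. Then the function f(z) = e^z(1 − e^{−(φ+1)z})/(φ+1) − (1 − e^{−φz})/φ is Π-integrable: ∫_{(0,∞)} f(z) Π(dz) < ∞. -/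
open MeasureTheory Real Set Filter

lemma exp_quad_aux {x : ℝ} (h : |x| ≤ 1) : Real.exp x ≤ 1 + x + x^2 := by
  have := Real.exp_bound h (n := 2) (by norm_num)
  simp [Finset.sum_range_succ] at this
  rw [abs_le] at this
  nlinarith [this.2, sq_abs x]

lemma exp_neg_quad_aux {t : ℝ} (ht : 0 ≤ t) : Real.exp (-t) ≤ 1 - t + t^2 := by
  rcases le_or_gt t 1 with h | h
  · have := exp_quad_aux (x := -t) (by rw [abs_le]; constructor <;> linarith)
    nlinarith
  · have h1 : Real.exp (-t) ≤ 1 := Real.exp_le_one_iff.mpr (by linarith)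
    nlinarith

/-- For a Lévy measure Π concentrated on (0,∞) with
∫ min(1,x²) dΠ < ∞ and ∫_{[1,∞)} e^x dΠ < ∞, the function
f(z) = e^z(1−e^{−(φ+1)z})/(φ+1) − (1−e^{−φz})/φ is Π-integrable on (0,∞). -/
theorem stmt_10 (ν : Measure ℝ)
    (hconc : ν (Set.Ioi (0:ℝ))ᶜ = 0)
    (hlevy : ∫⁻ x in Set.Ioi (0:ℝ), ENNReal.ofReal (min 1 (x ^ 2)) ∂ν < ⊤)
    (hexp : ∫⁻ x in Set.Ici (1:ℝ), ENNReal.ofReal (Real.exp x) ∂ν < ⊤)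
    (φ : ℝ) (hφ : 0 < φ) (f : ℝ → ℝ)
    (hf : ∀ z : ℝ, f z =
      Real.exp z * (1 - Real.exp (-(φ + 1) * z)) / (φ + 1)
        - (1 - Real.exp (-φ * z)) / φ) :
    MeasureTheory.IntegrableOn f (Set.Ioi (0:ℝ)) ν ∧
    ∫⁻ z in Set.Ioi (0:ℝ), ENNReal.ofReal (f z) ∂ν < ⊤ := by
  have hφ1 : (0:ℝ) < φ + 1 := by linarith
  -- closed form for f
  have hfe : ∀ z : ℝ, f z = (φ * Real.exp z + Real.exp (-φ * z) - (φ + 1)) / (φ * (φ + 1)) := by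
    intro z
    have h2 : Real.exp (-(φ+1)*z) = Real.exp (-φ*z) / Real.exp z := by
      rw [eq_div_iff (Real.exp_ne_zero _), ← Real.exp_add]; ring_nf
    rw [hf z, h2]
    field_simp
    ring
  -- nonnegativity on [0,∞)
  have hnonneg : ∀ z : ℝ, 0 ≤ z → 0 ≤ f z := by
    intro z hz
    rw [hfe z]
    have h1 : z + 1 ≤ Real.exp z := Real.add_one_le_exp z
    have h2 : -φ*z + 1 ≤ Real.exp (-φ*z) := Real.add_one_le_exp _
    apply div_nonneg _ (by positivity)
    nlinarith
  -- bound f z ≤ z^2 on (0,1]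
  have hsmall : ∀ z : ℝ, 0 < z → z ≤ 1 → f z ≤ z^2 := by
    intro z hz hz1
    rw [hfe z]
    have h1 : Real.exp z ≤ 1 + z + z^2 :=
      exp_quad_aux (by rw [abs_le]; constructor <;> linarith)
    have h2 : Real.exp (-(φ*z)) ≤ 1 - φ*z + (φ*z)^2 := exp_neg_quad_aux (by positivity)
    rw [div_le_iff₀ (by positivity)]
    have h3 : (φ*z)^2 = φ^2 * z^2 := by ring
    have : Real.exp (-φ*z) ≤ 1 - φ*z + φ^2*z^2 := by
      rw [neg_mul]; nlinarith
    nlinarith [sq_nonneg z, hφ.le, mul_pos hφ hz]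
  -- bound f z ≤ exp z for z ≥ 0
  have hbig : ∀ z : ℝ, 0 ≤ z → f z ≤ Real.exp z := by
    intro z hz
    rw [hfe z]
    have h2 : Real.exp (-φ*z) ≤ 1 := Real.exp_le_one_iff.mpr (by nlinarith)
    rw [div_le_iff₀ (by positivity)]
    nlinarith [Real.exp_pos z, mul_nonneg (mul_nonneg hφ.le hφ.le) (Real.exp_pos z).le]
  -- pointwise ENNReal bound
  set g : ℝ → ENNReal := fun z => ENNReal.ofReal (min 1 (z ^ 2))
      + (Set.Ici (1:ℝ)).indicator (fun z => ENNReal.ofReal (Real.exp z)) z with hg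
  have hgmeas : Measurable g := by
    refine Measurable.add (f := fun z => ENNReal.ofReal (min 1 (z ^ 2))) (g := fun z => (Set.Ici (1:ℝ)).indicator (fun z => ENNReal.ofReal (Real.exp z)) z) ?_ ?_
    · exact (measurable_const.min (measurable_id.pow_const 2)).ennreal_ofReal
    · exact ((measurable_exp.ennreal_ofReal)).indicator measurableSet_Ici
  have hptwise : ∀ z ∈ Set.Ioi (0:ℝ), ENNReal.ofReal (f z) ≤ g z := by
    intro z hz
    simp only [Set.mem_Ioi] at hz
    rcases le_or_gt z 1 with h | h
    · have hb : f z ≤ min 1 (z^2) := by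
        have := hsmall z hz h
        have : f z ≤ z^2 := this
        have hmin : min 1 (z^2) = z^2 := min_eq_right (by nlinarith)
        rw [hmin]; exact this
      calc ENNReal.ofReal (f z) ≤ ENNReal.ofReal (min 1 (z^2)) := ENNReal.ofReal_le_ofReal hb
        _ ≤ g z := le_self_add
    · have hz1 : z ∈ Set.Ici (1:ℝ) := h.le
      have : (Set.Ici (1:ℝ)).indicator (fun z => ENNReal.ofReal (Real.exp z)) z
          = ENNReal.ofReal (Real.exp z) := Set.indicator_of_mem hz1 _
      calc ENNReal.ofReal (f z) ≤ ENNReal.ofReal (Real.exp z) :=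
            ENNReal.ofReal_le_ofReal (hbig z hz.le)
        _ = (Set.Ici (1:ℝ)).indicator (fun z => ENNReal.ofReal (Real.exp z)) z := this.symm
        _ ≤ g z := le_add_self
  -- lintegral of g is finite
  have hgfin : ∫⁻ z in Set.Ioi (0:ℝ), g z ∂ν < ⊤ := by
    simp only [hg]
    rw [lintegral_add_left (g := fun z => (Set.Ici (1:ℝ)).indicator (fun z => ENNReal.ofReal (Real.exp z)) z) (by measurability)]
    apply ENNReal.add_lt_top.mpr
    refine ⟨hlevy, ?_⟩
    have h1 : ∫⁻ z in Set.Ioi (0:ℝ),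
        (Set.Ici (1:ℝ)).indicator (fun z => ENNReal.ofReal (Real.exp z)) z ∂ν
        = ∫⁻ z in Set.Ici (1:ℝ), ENNReal.ofReal (Real.exp z) ∂(ν.restrict (Set.Ioi 0)) := by
      rw [lintegral_indicator measurableSet_Ici]
    rw [h1, Measure.restrict_restrict measurableSet_Ici]
    calc ∫⁻ z in Set.Ici 1 ∩ Set.Ioi 0, ENNReal.ofReal (Real.exp z) ∂ν
        ≤ ∫⁻ z in Set.Ici (1:ℝ), ENNReal.ofReal (Real.exp z) ∂ν :=
          lintegral_mono' (Measure.restrict_mono Set.inter_subset_left le_rfl) le_rfl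
      _ < ⊤ := hexp
  have hlint : ∫⁻ z in Set.Ioi (0:ℝ), ENNReal.ofReal (f z) ∂ν < ⊤ :=
    lt_of_le_of_lt (setLIntegral_mono hgmeas hptwise) hgfin
  refine ⟨?_, hlint⟩
  -- integrability
  have hcont : Continuous f := by
    have : f = fun z => (φ * Real.exp z + Real.exp (-φ * z) - (φ + 1)) / (φ * (φ + 1)) := by
      funext z; exact hfe z
    rw [this]
    fun_prop
  constructor
  · exact hcont.aestronglyMeasurable
  · rw [hasFiniteIntegral_iff_ofReal]
    · exact hlint
    · exact (ae_restrict_iff' measurableSet_Ioi).mpr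
        (ae_of_all _ fun z hz => hnonneg z (Set.mem_Ioi.mp hz).le)
end

section
/- Let Π be a measure on ℝ concentrated on (0,∞) satisfying ∫_{(0,∞)} min(1, x²) Π(dx) < ∞ and ∫_{[1,∞)} e^{x} Π(dx) < ∞, let μ ∈ ℝ, b ≥ 0, and let ψ(θ) = μθ + (b²/2)θ² + ∫_{(0,∞)} (e^{−θx} − 1 + θx·1_{{x<1}}) Π(dx). Then for every φ > 0, with f(z) = e^z(1 − e^{−(φ+1)z})/(φ+1) − (1 − e^{−φz})/φ and q = ψ(φ), one has ∫_{(0,∞)} f(z) Π(dz) = (ψ(−1) + μ − b²/2)/(φ+1) + (q − μφ − b²φ²/2)/(φ(φ+1)). -/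
open MeasureTheory Real Set Filter

lemma aux_exp_neg_quad (t : ℝ) (ht : 0 ≤ t) : Real.exp (-t) - 1 + t ≤ t ^ 2 / 2 := by
  have hd : ∀ x : ℝ, HasDerivAt (fun t : ℝ => t ^ 2 / 2 - (Real.exp (-t) - 1 + t))
      (x - (Real.exp (-x) * (-1) + 1)) x := by
    intro x
    have h1 : HasDerivAt (fun t : ℝ => Real.exp (-t)) (Real.exp (-x) * (-1)) x :=
      (hasDerivAt_neg x).exp
    have h2 : HasDerivAt (fun t : ℝ => t ^ 2 / 2) x x := by
      simpa using (hasDerivAt_pow 2 x).div_const 2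
    exact h2.sub ((h1.sub_const 1).add (hasDerivAt_id x))
  have key : Monotone (fun t : ℝ => t ^ 2 / 2 - (Real.exp (-t) - 1 + t)) := by
    apply monotone_of_deriv_nonneg
    · exact fun x => (hd x).differentiableAt
    · intro x
      rw [(hd x).deriv]
      have := Real.add_one_le_exp (-x)
      nlinarith [Real.exp_pos (-x)]
  have h0 := key ht
  simp only [ne_eq, OfNat.ofNat_ne_zero, not_false_eq_true, zero_pow, zero_div, neg_zero,
    Real.exp_zero] at h0
  linarith

/-- Closed form for ∫_{(0,∞)} f dΠ in terms of the Laplace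
exponent ψ: with q = ψ(φ),
∫ f dΠ = (ψ(−1) + μ − b²/2)/(φ+1) + (q − μφ − b²φ²/2)/(φ(φ+1)). -/
theorem stmt_11 (ν : Measure ℝ)
    (hconc : ν (Set.Ioi (0:ℝ))ᶜ = 0)
    (hlevy : ∫⁻ x in Set.Ioi (0:ℝ), ENNReal.ofReal (min 1 (x ^ 2)) ∂ν < ⊤)
    (hexp : ∫⁻ x in Set.Ici (1:ℝ), ENNReal.ofReal (Real.exp x) ∂ν < ⊤)
    (μ b : ℝ) (hb : 0 ≤ b)
    (ψ : ℝ → ℝ)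
    (hψ : ∀ θ : ℝ, -1 ≤ θ →
      ψ θ = μ * θ + b ^ 2 / 2 * θ ^ 2 +
        ∫ x in Set.Ioi (0:ℝ),
          (Real.exp (-θ * x) - 1 + θ * (if x < 1 then x else 0)) ∂ν)
    (φ : ℝ) (hφ : 0 < φ) (f : ℝ → ℝ)
    (hf : ∀ z : ℝ, f z =
      Real.exp z * (1 - Real.exp (-(φ + 1) * z)) / (φ + 1)
        - (1 - Real.exp (-φ * z)) / φ) :
    ∫ z in Set.Ioi (0:ℝ), f z ∂ν =
      (ψ (-1) + μ - b ^ 2 / 2) / (φ + 1)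
        + (ψ φ - μ * φ - b ^ 2 * φ ^ 2 / 2) / (φ * (φ + 1)) := by
  -- Integrability of the two building blocks of the bound
  have hmin : Integrable (fun x => min 1 (x ^ 2)) (ν.restrict (Set.Ioi 0)) := by
    constructor
    · exact (continuous_const.min (continuous_pow 2)).aestronglyMeasurable
    · rw [hasFiniteIntegral_iff_ofReal
        (ae_of_all _ fun x => le_min zero_le_one (sq_nonneg x))]
      exact hlevy
  have hexpInd : Integrable ((Set.Ici (1:ℝ)).indicator Real.exp) (ν.restrict (Set.Ioi 0)) := by
    rw [integrable_indicator_iff measurableSet_Ici]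
    have hsub : Set.Ici (1:ℝ) ∩ Set.Ioi 0 = Set.Ici 1 := by
      apply Set.inter_eq_left.mpr
      intro x hx
      exact lt_of_lt_of_le one_pos (Set.mem_Ici.mp hx)
    rw [IntegrableOn, Measure.restrict_restrict measurableSet_Ici, hsub]
    constructor
    · exact Real.continuous_exp.aestronglyMeasurable
    · rw [hasFiniteIntegral_iff_ofReal (ae_of_all _ fun x => (Real.exp_pos x).le)]
      exact hexp
  -- Integrability of g_θ
  have hgint : ∀ θ : ℝ, θ = -1 ∨ 0 < θ →
      IntegrableOn (fun x => Real.exp (-θ * x) - 1 + θ * (if x < 1 then x else 0))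
        (Set.Ioi 0) ν := by
    intro θ hθ
    apply Integrable.mono' ((hmin.const_mul (1 + θ ^ 2)).add hexpInd)
    · apply Measurable.aestronglyMeasurable
      have h1 : Measurable fun x : ℝ => Real.exp (-θ * x) :=
        Real.measurable_exp.comp (measurable_id.const_mul (-θ))
      have h2 : Measurable fun x : ℝ => (if x < 1 then x else 0 : ℝ) :=
        Measurable.ite measurableSet_Iio measurable_id measurable_const
      exact ((h1.sub measurable_const).add (h2.const_mul θ))
    · filter_upwards [ae_restrict_mem measurableSet_Ioi] with x hx
      have hx0 : (0:ℝ) < x := hx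
      simp only [Pi.add_apply]
      rcases lt_or_ge x 1 with h1 | h1
      · -- small x
        have hmin' : min 1 (x ^ 2) = x ^ 2 := min_eq_right (by nlinarith)
        have hind : (Set.Ici (1:ℝ)).indicator Real.exp x = 0 :=
          Set.indicator_of_notMem (by simpa using h1) _
        rw [if_pos h1, hind, hmin']
        rcases hθ with rfl | hθpos
        · have habs : |Real.exp x - 1 - x| ≤ x ^ 2 :=
            Real.abs_exp_sub_one_sub_id_le (by rw [abs_of_pos hx0]; linarith)
          have : Real.exp (-(-1) * x) - 1 + -1 * x = Real.exp x - 1 - x := by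
            norm_num
            ring
          rw [this]
          rw [Real.norm_eq_abs]
          nlinarith [sq_nonneg x]
        · have hnn : 0 ≤ Real.exp (-(θ * x)) - 1 + θ * x := by
            have := Real.add_one_le_exp (-(θ * x)); linarith
          have hub : Real.exp (-(θ * x)) - 1 + θ * x ≤ (θ * x) ^ 2 / 2 :=
            aux_exp_neg_quad (θ * x) (by positivity)
          have heq : -θ * x = -(θ * x) := by ring
          rw [heq, Real.norm_eq_abs, abs_of_nonneg hnn]
          nlinarith [sq_nonneg x, sq_nonneg θ, sq_nonneg (θ*x)]
      · -- large x
        have hmin' : min 1 (x ^ 2) = 1 := min_eq_left (by nlinarith)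
        have hind : (Set.Ici (1:ℝ)).indicator Real.exp x = Real.exp x :=
          Set.indicator_of_mem (by simpa using h1) _
        rw [if_neg (not_lt.mpr h1), hind, hmin', mul_zero, add_zero]
        rcases hθ with rfl | hθpos
        · have : Real.exp (-(-1) * x) - 1 = Real.exp x - 1 := by norm_num
          rw [this, Real.norm_eq_abs, abs_of_nonneg (by nlinarith [Real.exp_pos x, Real.add_one_le_exp x])]
          nlinarith [sq_nonneg (-1:ℝ)]
        · have hle1 : Real.exp (-θ * x) ≤ 1 := by
            rw [Real.exp_le_one_iff]
            nlinarith
          have hpos := Real.exp_pos (-θ * x)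
          have habs : |Real.exp (-θ * x) - 1| ≤ 1 := abs_le.mpr ⟨by linarith, by linarith⟩
          rw [Real.norm_eq_abs]
          nlinarith [Real.exp_pos x, sq_nonneg θ]
  have h1 := hgint (-1) (Or.inl rfl)
  have h2 := hgint φ (Or.inr hφ)
  have hφ1 : φ + 1 ≠ 0 := by positivity
  have hφ0 : φ ≠ 0 := ne_of_gt hφ
  have hfeq : ∀ z : ℝ, f z =
      (1/(φ+1)) * (Real.exp (-(-1) * z) - 1 + (-1) * (if z < 1 then z else 0))
        + (1/(φ*(φ+1))) * (Real.exp (-φ * z) - 1 + φ * (if z < 1 then z else 0)) := by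
    intro z
    have hez : Real.exp z ≠ 0 := Real.exp_ne_zero z
    have hE1 : Real.exp (-(-1 : ℝ) * z) = Real.exp z := by norm_num
    have hE : Real.exp (-(φ+1) * z) = Real.exp (-φ * z) / Real.exp z := by
      rw [eq_div_iff hez, ← Real.exp_add]; congr 1; ring
    rw [hf, hE, hE1]
    generalize (if z < 1 then z else 0) = t
    field_simp
    ring
  have hI : ∫ z in Set.Ioi (0:ℝ), f z ∂ν =
      (1/(φ+1)) * ∫ x in Set.Ioi (0:ℝ),
          (Real.exp (-(-1) * x) - 1 + (-1) * (if x < 1 then x else 0)) ∂ν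
        + (1/(φ*(φ+1))) * ∫ x in Set.Ioi (0:ℝ),
          (Real.exp (-φ * x) - 1 + φ * (if x < 1 then x else 0)) ∂ν := by
    rw [show (fun z => f z) = (fun z =>
      (1/(φ+1)) * (Real.exp (-(-1) * z) - 1 + (-1) * (if z < 1 then z else 0))
        + (1/(φ*(φ+1))) * (Real.exp (-φ * z) - 1 + φ * (if z < 1 then z else 0)))
      from funext hfeq]
    rw [integral_add (h1.const_mul _) (h2.const_mul _), integral_const_mul,
      integral_const_mul]
  rw [hI, hψ (-1) le_rfl, hψ φ (by linarith)]
  field_simp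
  ring
end

section
/- Let Π be a measure on ℝ concentrated on (0,∞) satisfying ∫_{(0,∞)} min(1, x²) Π(dx) < ∞ and ∫_{[1,∞)} e^{x} Π(dx) < ∞, let φ > 0 and K > 0, and define J(c) = ∫_{(log K − c, ∞)} f(x − (log K − c)) Π(dx) for c ≤ log K, where f(z) = e^z(1 − e^{−(φ+1)z})/(φ+1) − (1 − e^{−φz})/φ. Then J is finite, nondecreasing and continuous on (−∞, log K), J(c) → 0 as c → −∞, and J(c) → ∫_{(0,∞)} f(z) Π(dz) as c ↑ log K. -/
open MeasureTheory Real Set Filter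
open Topology

/-- Properties of J(c) = ∫_{(log K − c, ∞)} f(x − (log K − c)) Π(dx)
on (−∞, log K): finiteness (integrability), monotonicity, continuity,
J(c) → 0 as c → −∞ and J(c) → ∫_{(0,∞)} f dΠ as c ↑ log K. -/
theorem stmt_12 (ν : Measure ℝ)
    (hconc : ν (Set.Ioi (0:ℝ))ᶜ = 0)
    (hlevy : ∫⁻ x in Set.Ioi (0:ℝ), ENNReal.ofReal (min 1 (x ^ 2)) ∂ν < ⊤)
    (hexp : ∫⁻ x in Set.Ici (1:ℝ), ENNReal.ofReal (Real.exp x) ∂ν < ⊤)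
    (φ K : ℝ) (hφ : 0 < φ) (hK : 0 < K)
    (f : ℝ → ℝ)
    (hf : ∀ z : ℝ, f z =
      Real.exp z * (1 - Real.exp (-(φ + 1) * z)) / (φ + 1)
        - (1 - Real.exp (-φ * z)) / φ)
    (J : ℝ → ℝ)
    (hJ : ∀ c : ℝ, J c =
      ∫ x in Set.Ioi (Real.log K - c), f (x - (Real.log K - c)) ∂ν) :
    (∀ c : ℝ, c < Real.log K →
      MeasureTheory.IntegrableOn (fun x : ℝ => f (x - (Real.log K - c)))
        (Set.Ioi (Real.log K - c)) ν) ∧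
    MonotoneOn J (Set.Iio (Real.log K)) ∧
    ContinuousOn J (Set.Iio (Real.log K)) ∧
    Tendsto J atBot (nhds 0) ∧
    Tendsto J (nhdsWithin (Real.log K) (Set.Iio (Real.log K)))
      (nhds (∫ z in Set.Ioi (0:ℝ), f z ∂ν)) := by
  have hφ1 : (0:ℝ) < φ + 1 := by linarith
  have hmul : ∀ z : ℝ, Real.exp z * Real.exp (-(φ+1)*z) = Real.exp (-φ*z) := by
    intro z; rw [← Real.exp_add]; ring_nf
  have hE : ∀ z, HasDerivAt (fun z => Real.exp (-(φ+1)*z)) (-(φ+1) * Real.exp (-(φ+1)*z)) z := by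
    intro z
    have := ((hasDerivAt_id z).const_mul (-(φ+1))).exp
    simpa [mul_comm] using this
  have hE2 : ∀ z, HasDerivAt (fun z => Real.exp (-φ*z)) (-φ * Real.exp (-φ*z)) z := by
    intro z
    have := ((hasDerivAt_id z).const_mul (-φ)).exp
    simpa [mul_comm] using this
  have hfe : f = fun z => Real.exp z * (1 - Real.exp (-(φ + 1) * z)) / (φ + 1)
        - (1 - Real.exp (-φ * z)) / φ := funext hf
  have hd : ∀ z, HasDerivAt f ((Real.exp z - Real.exp (-φ*z)) / (φ+1)) z := by
    intro z
    rw [hfe]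
    have h1 := (((Real.hasDerivAt_exp z).mul ((hasDerivAt_const z (1:ℝ)).sub (hE z))).div_const (φ+1)).sub
      (((hasDerivAt_const z (1:ℝ)).sub (hE2 z)).div_const φ)
    refine h1.congr_deriv ?_
    have key := hmul z
    set E := Real.exp (-(φ+1)*z) with hE'
    set E2 := Real.exp (-φ*z) with hE2'
    simp only [Pi.sub_apply]
    field_simp
    have hEE : Real.exp (-((φ+1)*z)) = E := by rw [hE', neg_mul]
    linear_combination φ^2*key - φ * Real.exp z * hEE
  have hcont : Continuous f := by rw [hfe]; fun_prop
  have hf0 : f 0 = 0 := by rw [hfe]; simp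
  have hmono : MonotoneOn f (Set.Ici 0) := by
    apply monotoneOn_of_deriv_nonneg (convex_Ici 0) hcont.continuousOn
      (fun z _ => ((hd z).differentiableAt).differentiableWithinAt)
    intro z hz
    rw [interior_Ici] at hz
    rw [(hd z).deriv]
    have h1 : Real.exp (-φ*z) ≤ 1 := by
      rw [Real.exp_le_one_iff]; nlinarith [le_of_lt (Set.mem_Ioi.mp hz)]
    have h2 : (1:ℝ) ≤ Real.exp z := Real.one_le_exp (le_of_lt (Set.mem_Ioi.mp hz))
    exact div_nonneg (by linarith) (by linarith)
  have hnn : ∀ z : ℝ, 0 ≤ z → 0 ≤ f z := by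
    intro z hz
    rw [← hf0]
    exact hmono (Set.mem_Ici.mpr (le_refl 0)) hz hz
  have hquad : ∀ z : ℝ, 0 ≤ z → f z ≤ z^2 * Real.exp z := by
    have hg : ∀ z, HasDerivAt (fun z => z^2 * Real.exp z - f z)
        (2*z*Real.exp z + z^2*Real.exp z - (Real.exp z - Real.exp (-φ*z)) / (φ+1)) z := by
      intro z
      have := ((hasDerivAt_pow 2 z).mul (Real.hasDerivAt_exp z)).sub (hd z)
      refine this.congr_deriv ?_
      norm_num
    have hgm : MonotoneOn (fun z => z^2 * Real.exp z - f z) (Set.Ici 0) := by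
      apply monotoneOn_of_deriv_nonneg (convex_Ici 0)
        (((continuous_pow 2).mul Real.continuous_exp).sub hcont).continuousOn
        (fun z _ => ((hg z).differentiableAt).differentiableWithinAt)
      intro z hz
      rw [interior_Ici] at hz
      rw [show ((fun a : ℝ => a ^ 2) * Real.exp - f) = (fun z => z^2 * Real.exp z - f z) from rfl, (hg z).deriv]
      have h1 : (-(φ+1)*z) + 1 ≤ Real.exp (-(φ+1)*z) := Real.add_one_le_exp _
      have key := hmul z
      have h2 : Real.exp z - Real.exp (-φ*z) ≤ (φ+1) * z * Real.exp z := by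
        nlinarith [Real.exp_pos z]
      have h3 : (Real.exp z - Real.exp (-φ*z)) / (φ+1) ≤ z * Real.exp z := by
        rw [div_le_iff₀ hφ1]; nlinarith
      have hz' : (0:ℝ) < z := hz
      nlinarith [Real.exp_pos z, mul_pos hz' (Real.exp_pos z), mul_pos (mul_pos hz' hz') (Real.exp_pos z)]
    intro z hz
    have := hgm (Set.mem_Ici.mpr (le_refl 0)) hz hz
    simp only [hf0] at this
    nlinarith [this]
  have hexpb : ∀ z : ℝ, 0 ≤ z → f z ≤ Real.exp z := by
    intro z hz
    have h1 : Real.exp (-φ*z) ≤ 1 := by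
      rw [Real.exp_le_one_iff]; nlinarith
    have h2 : (0:ℝ) ≤ Real.exp (-(φ+1)*z) := (Real.exp_pos _).le
    have h3 : (0:ℝ) < Real.exp z := Real.exp_pos z
    have h4 : Real.exp z * (1 - Real.exp (-(φ+1)*z)) / (φ+1) ≤ Real.exp z := by
      rw [div_le_iff₀ hφ1]; nlinarith
    have h5 : (0:ℝ) ≤ (1 - Real.exp (-φ*z)) / φ := div_nonneg (by linarith) hφ.le
    rw [hf z]
    linarith
  -- the dominating function
  set g : ℝ → ℝ := fun x => Real.exp 1 * min 1 (x^2) + (Set.Ici 1).indicator Real.exp x with hgdef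
  have hgnn : ∀ x, 0 ≤ g x := fun x =>
    add_nonneg (mul_nonneg (Real.exp_pos 1).le (le_min zero_le_one (sq_nonneg x)))
      (Set.indicator_nonneg (fun y _ => (Real.exp_pos y).le) x)
  have hae : ∀ᵐ x ∂ν, x ∈ Set.Ioi (0:ℝ) := by
    rw [MeasureTheory.ae_iff]
    simpa [Set.compl_def] using hconc
  have hνr : ν.restrict (Set.Ioi 0) = ν := Measure.restrict_eq_self_of_ae_mem hae
  have hint1 : Integrable (fun x => Real.exp 1 * min 1 (x^2)) (ν.restrict (Set.Ioi 0)) := by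
    apply Integrable.const_mul
    refine ⟨(continuous_const.min (continuous_pow 2)).aestronglyMeasurable, ?_⟩
    rw [hasFiniteIntegral_iff_ofReal (ae_of_all _ fun x => le_min zero_le_one (sq_nonneg x))]
    exact hlevy
  have hint2 : Integrable ((Set.Ici (1:ℝ)).indicator Real.exp) (ν.restrict (Set.Ioi 0)) := by
    rw [integrable_indicator_iff measurableSet_Ici]
    have hss : Set.Ici (1:ℝ) ∩ Set.Ioi 0 = Set.Ici 1 :=
      Set.inter_eq_self_of_subset_left (fun x hx => Set.mem_Ioi.mpr (lt_of_lt_of_le one_pos hx))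
    rw [IntegrableOn, Measure.restrict_restrict measurableSet_Ici, hss]
    refine ⟨Real.continuous_exp.aestronglyMeasurable, ?_⟩
    rw [hasFiniteIntegral_iff_ofReal (ae_of_all _ fun x => (Real.exp_pos x).le)]
    exact hexp
  have hg_int : Integrable g ν := by
    rw [← hνr]
    exact hint1.add hint2
  have hfg : ∀ x : ℝ, 0 < x → f x ≤ g x := by
    intro x hx
    by_cases h : 1 ≤ x
    · have h1 := hexpb x (by linarith)
      have h2 : (Set.Ici (1:ℝ)).indicator Real.exp x = Real.exp x := Set.indicator_of_mem h _
      have h3 : (0:ℝ) ≤ Real.exp 1 * min 1 (x^2) :=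
        mul_nonneg (Real.exp_pos 1).le (le_min zero_le_one (sq_nonneg x))
      simp only [hgdef]
      rw [h2]
      linarith
    · push_neg at h
      have h1 : min 1 (x^2) = x^2 := min_eq_right (by nlinarith)
      have h2 := hquad x hx.le
      have h3 : Real.exp x ≤ Real.exp 1 := Real.exp_le_exp.mpr h.le
      have h4 : (0:ℝ) ≤ (Set.Ici (1:ℝ)).indicator Real.exp x :=
        Set.indicator_nonneg (fun y _ => (Real.exp_pos y).le) x
      simp only [hgdef]
      rw [h1]
      nlinarith [sq_nonneg x, Real.exp_pos x]
  have hFle : ∀ a : ℝ, 0 ≤ a → ∀ x, ‖(Set.Ioi a).indicator (fun y => f (y - a)) x‖ ≤ g x := by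
    intro a ha x
    by_cases hx : x ∈ Set.Ioi a
    · rw [Set.indicator_of_mem hx]
      have hax : a < x := hx
      have hxa : (0:ℝ) ≤ x - a := by linarith
      have h0 : 0 ≤ f (x - a) := hnn _ hxa
      rw [Real.norm_eq_abs, abs_of_nonneg h0]
      have hle : f (x - a) ≤ f x := hmono hxa (by linarith : (0:ℝ) ≤ x) (by linarith)
      exact le_trans hle (hfg x (by linarith))
    · rw [Set.indicator_of_notMem hx]
      simpa using hgnn x
  have hFmeas : ∀ a : ℝ, AEStronglyMeasurable ((Set.Ioi a).indicator (fun y => f (y - a))) ν :=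
    fun a => ((hcont.comp (continuous_sub_right a)).aestronglyMeasurable).indicator measurableSet_Ioi
  have hFint : ∀ a : ℝ, 0 ≤ a → Integrable ((Set.Ioi a).indicator (fun y => f (y - a))) ν :=
    fun a ha => Integrable.mono' hg_int (hFmeas a) (ae_of_all _ (hFle a ha))
  have hJ' : ∀ c : ℝ, J c = ∫ x, (Set.Ioi (Real.log K - c)).indicator
      (fun y => f (y - (Real.log K - c))) x ∂ν := by
    intro c
    rw [hJ c, integral_indicator measurableSet_Ioi]
  -- pointwise convergence helper
  have hptw : ∀ {l : Filter ℝ} (a : ℝ → ℝ) (a0 : ℝ), Tendsto a l (𝓝 a0) → ∀ x : ℝ,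
      Tendsto (fun i => (Set.Ioi (a i)).indicator (fun y => f (y - a i)) x) l
        (𝓝 ((Set.Ioi a0).indicator (fun y => f (y - a0)) x)) := by
    intro l a a0 ha x
    rcases lt_trichotomy a0 x with h | h | h
    · rw [Set.indicator_of_mem (Set.mem_Ioi.mpr h)]
      have hev : ∀ᶠ i in l, f (x - a i) = (Set.Ioi (a i)).indicator (fun y => f (y - a i)) x := by
        filter_upwards [ha.eventually_lt_const h] with i hi
        exact (Set.indicator_of_mem (Set.mem_Ioi.mpr hi) (fun y => f (y - a i))).symm
      have hT : Tendsto (fun i => f (x - a i)) l (𝓝 (f (x - a0))) :=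
        (hcont.tendsto _).comp (tendsto_const_nhds.sub ha)
      exact hT.congr' hev
    · rw [← h]
      rw [Set.indicator_of_notMem (by simp : a0 ∉ Set.Ioi a0)]
      refine squeeze_zero_norm (a := fun i => |f (a0 - a i)|) (fun i => ?_) ?_
      · by_cases hi : a0 ∈ Set.Ioi (a i)
        · rw [Set.indicator_of_mem hi, Real.norm_eq_abs]
        · rw [Set.indicator_of_notMem hi]
          simp [abs_nonneg]
      · have hT : Tendsto (fun i => f (a0 - a i)) l (𝓝 (f (a0 - a0))) :=
          (hcont.tendsto _).comp (tendsto_const_nhds.sub ha)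
        rw [sub_self, hf0] at hT
        simpa using hT.abs
    · rw [Set.indicator_of_notMem (by simp only [Set.mem_Ioi, not_lt]; linarith : x ∉ Set.Ioi a0)]
      have hev : ∀ᶠ i in l, (0:ℝ) = (Set.Ioi (a i)).indicator (fun y => f (y - a i)) x := by
        filter_upwards [ha.eventually_const_lt h] with i hi
        exact (Set.indicator_of_notMem (by simp only [Set.mem_Ioi, not_lt]; linarith : x ∉ Set.Ioi (a i)) (fun y => f (y - a i))).symm
      exact tendsto_const_nhds.congr' hev
  refine ⟨?_, ?_, ?_, ?_, ?_⟩
  · -- integrability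
    intro c hc
    have ha : 0 ≤ Real.log K - c := by linarith
    have := hFint _ ha
    rwa [integrable_indicator_iff measurableSet_Ioi] at this
  · -- monotone
    intro c1 hc1 c2 hc2 hcc
    have hc1' : c1 < Real.log K := hc1
    have hc2' : c2 < Real.log K := hc2
    rw [hJ' c1, hJ' c2]
    apply integral_mono (hFint _ (by linarith)) (hFint _ (by linarith))
    intro x
    by_cases hx : x ∈ Set.Ioi (Real.log K - c1)
    · have hx1 : Real.log K - c1 < x := hx
      rw [Set.indicator_of_mem hx, Set.indicator_of_mem (show x ∈ Set.Ioi (Real.log K - c2) by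
        simp only [Set.mem_Ioi]; linarith)]
      exact hmono (by simp only [Set.mem_Ici]; linarith) (by simp only [Set.mem_Ici]; linarith)
        (by linarith)
    · rw [Set.indicator_of_notMem hx]
      by_cases hx2 : x ∈ Set.Ioi (Real.log K - c2)
      · have hx2' : Real.log K - c2 < x := hx2
        rw [Set.indicator_of_mem hx2]
        exact hnn _ (by linarith)
      · rw [Set.indicator_of_notMem hx2]
  · -- continuity
    intro c0 hc0
    have hc0' : c0 < Real.log K := hc0
    have key : Tendsto (fun c => ∫ x, (Set.Ioi (Real.log K - c)).indicator
        (fun y => f (y - (Real.log K - c))) x ∂ν)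
        (𝓝[Set.Iio (Real.log K)] c0)
        (𝓝 (∫ x, (Set.Ioi (Real.log K - c0)).indicator
          (fun y => f (y - (Real.log K - c0))) x ∂ν)) := by
      refine tendsto_integral_filter_of_dominated_convergence g
        (Eventually.of_forall fun c => hFmeas _) ?_ hg_int ?_
      · filter_upwards [eventually_mem_nhdsWithin] with c hc
        have hc' : c < Real.log K := hc
        exact ae_of_all _ (hFle _ (by linarith))
      · refine ae_of_all _ fun x => ?_
        refine hptw (fun c => Real.log K - c) (Real.log K - c0) ?_ x
        exact ((continuous_const.sub continuous_id).tendsto c0).mono_left nhdsWithin_le_nhds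
    have : Tendsto J (𝓝[Set.Iio (Real.log K)] c0) (𝓝 (J c0)) := by
      rw [hJ' c0]
      exact key.congr fun c => (hJ' c).symm
    exact this
  · -- limit at -infty
    have key : Tendsto (fun c => ∫ x, (Set.Ioi (Real.log K - c)).indicator
        (fun y => f (y - (Real.log K - c))) x ∂ν) atBot (𝓝 (∫ _x, (0:ℝ) ∂ν)) := by
      refine tendsto_integral_filter_of_dominated_convergence g
        (Eventually.of_forall fun c => hFmeas _) ?_ hg_int ?_
      · filter_upwards [eventually_le_atBot (Real.log K)] with c hc
        exact ae_of_all _ (hFle _ (by linarith))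
      · refine ae_of_all _ fun x => ?_
        have hev : ∀ᶠ c in atBot, (0:ℝ) =
            (Set.Ioi (Real.log K - c)).indicator (fun y => f (y - (Real.log K - c))) x := by
          filter_upwards [eventually_le_atBot (Real.log K - x - 1)] with c hc
          exact (Set.indicator_of_notMem (by simp only [Set.mem_Ioi, not_lt]; linarith) _).symm
        exact tendsto_const_nhds.congr' hev
    rw [integral_zero] at key
    exact key.congr fun c => (hJ' c).symm
  · -- limit as c ↑ log K
    have ha : Tendsto (fun c => Real.log K - c)
        (𝓝[Set.Iio (Real.log K)] (Real.log K)) (𝓝 0) := by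
      have hT : Tendsto (fun c => Real.log K - c) (𝓝 (Real.log K))
          (𝓝 (Real.log K - Real.log K)) := (continuous_const.sub continuous_id).tendsto _
      rw [sub_self] at hT
      exact hT.mono_left nhdsWithin_le_nhds
    have key : Tendsto (fun c => ∫ x, (Set.Ioi (Real.log K - c)).indicator
        (fun y => f (y - (Real.log K - c))) x ∂ν)
        (𝓝[Set.Iio (Real.log K)] (Real.log K))
        (𝓝 (∫ x, (Set.Ioi (0:ℝ)).indicator (fun y => f (y - 0)) x ∂ν)) := by
      refine tendsto_integral_filter_of_dominated_convergence g
        (Eventually.of_forall fun c => hFmeas _) ?_ hg_int ?_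
      · filter_upwards [eventually_mem_nhdsWithin] with c hc
        have hc' : c < Real.log K := hc
        exact ae_of_all _ (hFle _ (by linarith))
      · exact ae_of_all _ fun x => hptw (fun c => Real.log K - c) 0 ha x
    rw [integral_indicator measurableSet_Ioi] at key
    simp only [sub_zero] at key
    exact key.congr fun c => (hJ' c).symm
end

section
/- Let Π be a measure on ℝ concentrated on (0,∞) satisfying ∫_{(0,∞)} min(1, x²) Π(dx) < ∞ and ∫_{[1,∞)} e^{x} Π(dx) < ∞, let μ ∈ ℝ, b ≥ 0, ψ(θ) = μθ + (b²/2)θ² + ∫_{(0,∞)} (e^{−θx} − 1 + θx·1_{{x<1}}) Π(dx), let φ > 0 and set q = ψ(φ), and let α, β, K > 0. Define, for c < log K, F(c) = K(1 − q/φ) + α/φ + βe^{c}/(φ+1) + K·∫_{(log K − c, ∞)} f(x − (log K − c)) Π(dx), where f(z) = e^z(1 − e^{−(φ+1)z})/(φ+1) − (1 − e^{−φz})/φ. Then F is continuous and strictly increasing on (−∞, log K), F(c) → K − (qK − α)/φ as c → −∞, and F(c) → K + α/φ + K(β + ψ(−1) − q)/(φ+1) − Kb²/2 as c ↑ log K.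 -/
open MeasureTheory Real Set Filter

set_option maxHeartbeats 1000000

private lemma exp_neg_quad (u : ℝ) (hu : 0 ≤ u) : Real.exp (-u) ≤ 1 - u + u ^ 2 := by
  have h1 : (1 + u) * Real.exp (-u) ≤ 1 := by
    have h2 := Real.add_one_le_exp u
    have h3 : Real.exp (-u) * Real.exp u = 1 := by rw [← Real.exp_add]; simp
    nlinarith [Real.exp_pos (-u)]
  nlinarith [Real.exp_pos (-u)]

private lemma exp_sub_one_sub_le (u : ℝ) (hu : 0 ≤ u) :
    Real.exp u - 1 - u ≤ u ^ 2 * Real.exp u := by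
  have h1 := Real.add_one_le_exp (-u)
  have h2 := Real.add_one_le_exp u
  have h3 : Real.exp (-u) * Real.exp u = 1 := by rw [← Real.exp_add]; simp
  nlinarith [Real.exp_pos u, Real.exp_pos (-u)]

/-- Properties of the fit function
F(c) = K(1 − q/φ) + α/φ + βe^c/(φ+1) + K·∫_{(log K−c,∞)} f(x−(log K−c)) Π(dx)
(with q = ψ(φ)) on (−∞, log K): continuity, strict monotonicity, and the limits
F(c) → K − (qK−α)/φ as c → −∞ and
F(c) → K + α/φ + K(β+ψ(−1)−q)/(φ+1) − Kb²/2 as c ↑ log K. -/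
theorem stmt_13 (ν : Measure ℝ)
    (hconc : ν (Set.Ioi (0:ℝ))ᶜ = 0)
    (hlevy : ∫⁻ x in Set.Ioi (0:ℝ), ENNReal.ofReal (min 1 (x ^ 2)) ∂ν < ⊤)
    (hexp : ∫⁻ x in Set.Ici (1:ℝ), ENNReal.ofReal (Real.exp x) ∂ν < ⊤)
    (μ b : ℝ) (hb : 0 ≤ b)
    (ψ : ℝ → ℝ)
    (hψ : ∀ θ : ℝ, -1 ≤ θ →
      ψ θ = μ * θ + b ^ 2 / 2 * θ ^ 2 +
        ∫ x in Set.Ioi (0:ℝ),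
          (Real.exp (-θ * x) - 1 + θ * (if x < 1 then x else 0)) ∂ν)
    (φ : ℝ) (hφ : 0 < φ)
    (α β K : ℝ) (hα : 0 < α) (hβ : 0 < β) (hK : 0 < K)
    (f : ℝ → ℝ)
    (hf : ∀ z : ℝ, f z =
      Real.exp z * (1 - Real.exp (-(φ + 1) * z)) / (φ + 1)
        - (1 - Real.exp (-φ * z)) / φ)
    (F : ℝ → ℝ)
    (hF : ∀ c : ℝ, F c =
      K * (1 - ψ φ / φ) + α / φ + β * Real.exp c / (φ + 1)
        + K * ∫ x in Set.Ioi (Real.log K - c), f (x - (Real.log K - c)) ∂ν) :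
    ContinuousOn F (Set.Iio (Real.log K)) ∧
    StrictMonoOn F (Set.Iio (Real.log K)) ∧
    Tendsto F atBot (nhds (K - (ψ φ * K - α) / φ)) ∧
    Tendsto F (nhdsWithin (Real.log K) (Set.Iio (Real.log K)))
      (nhds (K + α / φ + K * (β + ψ (-1) - ψ φ) / (φ + 1) - K * b ^ 2 / 2)) := by
  have hφ1 : (0:ℝ) < φ + 1 := by linarith
  -- the explicit form of f
  have hfe : f = fun z => Real.exp z * (1 - Real.exp (-(φ + 1) * z)) / (φ + 1)
      - (1 - Real.exp (-φ * z)) / φ := funext hf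
  have hfc : Continuous f := by rw [hfe]; continuity
  have hf0 : f 0 = 0 := by rw [hf]; simp
  -- derivative of f
  have hfd : ∀ z : ℝ, HasDerivAt f ((Real.exp z - Real.exp (-φ * z)) / (φ + 1)) z := by
    intro z
    rw [hfe]
    have h1 : HasDerivAt (fun z : ℝ => Real.exp z) (Real.exp z) z := Real.hasDerivAt_exp z
    have h2 : HasDerivAt (fun z : ℝ => Real.exp (-(φ + 1) * z))
        (Real.exp (-(φ + 1) * z) * (-(φ + 1) * 1)) z :=
      ((hasDerivAt_id z).const_mul (-(φ + 1))).exp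
    have h3 : HasDerivAt (fun z : ℝ => Real.exp (-φ * z))
        (Real.exp (-φ * z) * (-φ * 1)) z :=
      ((hasDerivAt_id z).const_mul (-φ)).exp
    have h4 := ((h1.mul ((hasDerivAt_const z (1:ℝ)).sub h2)).div_const (φ + 1)).sub
      (((hasDerivAt_const z (1:ℝ)).sub h3).div_const φ)
    refine h4.congr_deriv ?_
    simp only [Pi.sub_apply]
    have hA : Real.exp (-(φ + 1) * z) = Real.exp (-φ * z) / Real.exp z := by
      rw [eq_div_iff (Real.exp_ne_zero z), ← Real.exp_add]
      congr 1; ring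
    rw [hA]
    have h5 := Real.exp_ne_zero z
    field_simp
    ring
  -- monotonicity of f on [0, ∞)
  have hmono : MonotoneOn f (Ici (0:ℝ)) := by
    apply monotoneOn_of_deriv_nonneg (convex_Ici 0) hfc.continuousOn
    · intro x _
      exact (hfd x).differentiableAt.differentiableWithinAt
    · intro x hx
      rw [interior_Ici, Set.mem_Ioi] at hx
      rw [(hfd x).deriv]
      have hle : Real.exp (-φ * x) ≤ Real.exp x := by
        apply Real.exp_le_exp.2; nlinarith
      exact div_nonneg (by linarith) hφ1.le
  -- f is nonnegative and bounded on [0, ∞)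
  have hfnn : ∀ z : ℝ, 0 ≤ z → 0 ≤ f z := by
    intro z hz
    have := hmono (self_mem_Ici) hz hz
    rwa [hf0] at this
  have hfle_exp : ∀ z : ℝ, 0 ≤ z → f z ≤ Real.exp z := by
    intro z hz
    rw [hf]
    have h1 : Real.exp (-(φ + 1) * z) ≤ 1 := Real.exp_le_one_iff.2 (by nlinarith)
    have h2 : Real.exp (-φ * z) ≤ 1 := Real.exp_le_one_iff.2 (by nlinarith)
    have h3 : 0 < Real.exp z := Real.exp_pos z
    have h4 : 0 < Real.exp (-(φ+1)*z) := Real.exp_pos _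
    have h5 : (1 - Real.exp (-φ * z)) / φ ≥ 0 := div_nonneg (by linarith) hφ.le
    have h6 : Real.exp z * (1 - Real.exp (-(φ + 1) * z)) / (φ + 1) ≤ Real.exp z := by
      rw [div_le_iff₀ hφ1]; nlinarith
    linarith
  have hfle_quad : ∀ z : ℝ, 0 ≤ z → f z ≤ (1 + φ) * Real.exp z * z ^ 2 := by
    intro z hz
    rw [hf]
    have h1 : 1 - Real.exp (-(φ + 1) * z) ≤ (φ + 1) * z := by
      have := Real.add_one_le_exp (-(φ + 1) * z); linarith
    have h2 : Real.exp (-(φ * z)) ≤ 1 - φ * z + (φ * z) ^ 2 :=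
      exp_neg_quad (φ * z) (by positivity)
    have h2' : Real.exp (-φ * z) ≤ 1 - φ * z + (φ * z) ^ 2 := by
      rw [show -φ * z = -(φ * z) by ring]; exact h2
    have h3 : 0 < Real.exp z := Real.exp_pos z
    have h4 : 0 ≤ Real.exp (-(φ+1)*z) := (Real.exp_pos _).le
    have h5 : Real.exp z - 1 ≤ z * Real.exp z := by
      have := exp_sub_one_sub_le z hz
      nlinarith
    have hA : Real.exp z * (1 - Real.exp (-(φ + 1) * z)) / (φ + 1) ≤ Real.exp z * z := by
      rw [div_le_iff₀ hφ1]
      calc Real.exp z * (1 - Real.exp (-(φ + 1) * z)) ≤ Real.exp z * ((φ + 1) * z) := by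
            nlinarith
        _ = Real.exp z * z * (φ + 1) := by ring
    have hB : z - φ * z ^ 2 ≤ (1 - Real.exp (-φ * z)) / φ := by
      rw [le_div_iff₀ hφ]; nlinarith
    have h6 : 1 ≤ Real.exp z := by
      have := Real.add_one_le_exp z; linarith
    have h7 : z * (Real.exp z - 1) ≤ z * (z * Real.exp z) := mul_le_mul_of_nonneg_left h5 hz
    have h8 : φ * z ^ 2 ≤ φ * z ^ 2 * Real.exp z := by nlinarith
    nlinarith [hA, hB, h7, h8]
  -- the truncated function
  set fp : ℝ → ℝ := fun z => f (max z 0) with hfp_def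
  have hfpc : Continuous fp := hfc.comp (continuous_id.max continuous_const)
  have hfpmono : Monotone fp := fun a c hac =>
    hmono (le_max_right a 0) (le_max_right c 0) (max_le_max hac le_rfl)
  have hfpnn : ∀ z, 0 ≤ fp z := fun z => hfnn _ (le_max_right z 0)
  have hfp_of_nonneg : ∀ z : ℝ, 0 ≤ z → fp z = f z := by
    intro z hz; simp only [hfp_def, max_eq_left hz]
  have hfp_of_nonpos : ∀ z : ℝ, z ≤ 0 → fp z = 0 := by
    intro z hz; simp only [hfp_def, max_eq_right hz, hf0]
  -- the dominating function
  set C : ℝ := (1 + φ) * Real.exp 1 + φ ^ 2 + 2 with hC_def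
  have hC1 : (1 + φ) * Real.exp 1 ≤ C := by
    simp only [hC_def]; nlinarith
  have hCnn : 0 ≤ C := by
    have := Real.exp_pos 1; simp only [hC_def]; nlinarith
  set G : ℝ → ℝ := fun x => C * min 1 (x ^ 2) + (Set.Ici (1:ℝ)).indicator Real.exp x
    with hG_def
  have hGnn : ∀ x, 0 ≤ G x := by
    intro x
    have h1 : 0 ≤ min 1 (x ^ 2) := le_min zero_le_one (sq_nonneg x)
    have h2 : 0 ≤ (Set.Ici (1:ℝ)).indicator Real.exp x :=
      Set.indicator_nonneg (fun y _ => (Real.exp_pos y).le) x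
    simp only [hG_def]; positivity
  -- integrability of the dominating function
  have hGint : Integrable G (ν.restrict (Set.Ioi 0)) := by
    apply Integrable.add
    · apply Integrable.const_mul
      refine ⟨(Continuous.aestronglyMeasurable (continuous_const.min (continuous_pow 2))), ?_⟩
      rw [hasFiniteIntegral_iff_ofReal]
      · exact hlevy
      · exact ae_of_all _ fun x => le_min zero_le_one (sq_nonneg x)
    · rw [integrable_indicator_iff measurableSet_Ici]
      have h1 : Integrable Real.exp (ν.restrict (Set.Ici 1)) := by
        refine ⟨Real.continuous_exp.aestronglyMeasurable, ?_⟩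
        rw [hasFiniteIntegral_iff_ofReal (ae_of_all _ fun x => (Real.exp_pos x).le)]
        exact hexp
      have h2 : (ν.restrict (Set.Ioi 0)).restrict (Set.Ici 1) ≤ ν.restrict (Set.Ici 1) := by
        rw [Measure.restrict_restrict measurableSet_Ici]
        exact Measure.restrict_mono Set.inter_subset_left le_rfl
      exact h1.mono_measure h2
  -- pointwise bound for fp (x - t)
  have hfpbd : ∀ t : ℝ, 0 ≤ t → ∀ x : ℝ, x ∈ Set.Ioi (0:ℝ) → ‖fp (x - t)‖ ≤ G x := by
    intro t ht x hx
    rw [Set.mem_Ioi] at hx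
    rw [Real.norm_eq_abs, abs_of_nonneg (hfpnn _)]
    have h1 : fp (x - t) ≤ fp x := hfpmono (by linarith)
    have h2 : fp x = f x := hfp_of_nonneg x hx.le
    rcases lt_or_ge x 1 with hx1 | hx1
    · have h3 : f x ≤ (1 + φ) * Real.exp x * x ^ 2 := hfle_quad x hx.le
      have h4 : Real.exp x ≤ Real.exp 1 := Real.exp_le_exp.2 hx1.le
      have h5 : min 1 (x ^ 2) = x ^ 2 := min_eq_right (by nlinarith)
      have h6 : (Set.Ici (1:ℝ)).indicator Real.exp x = 0 :=
        Set.indicator_of_notMem (by simpa using hx1) _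
      simp only [hG_def, h5, h6, add_zero]
      have h7 : (1 + φ) * Real.exp x * x ^ 2 ≤ C * x ^ 2 := by
        have h8 : (1 + φ) * Real.exp x ≤ C := le_trans (by nlinarith) hC1
        nlinarith [sq_nonneg x]
      linarith
    · have h3 : f x ≤ Real.exp x := hfle_exp x hx.le
      have h5 : min 1 (x ^ 2) = 1 := min_eq_left (by nlinarith)
      have h6 : (Set.Ici (1:ℝ)).indicator Real.exp x = Real.exp x :=
        Set.indicator_of_mem (by simpa using hx1) _
      simp only [hG_def, h5, h6, mul_one]
      linarith
  -- integrability of fp (· - t)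
  have hfpint : ∀ t : ℝ, 0 ≤ t →
      Integrable (fun x => fp (x - t)) (ν.restrict (Set.Ioi 0)) := by
    intro t ht
    refine hGint.mono' ((hfpc.comp (continuous_id.sub continuous_const)).aestronglyMeasurable) ?_
    exact (ae_restrict_mem measurableSet_Ioi).mono (fun x hx => hfpbd t ht x hx)
  -- J t := ∫_{(0,∞)} fp (x - t) ν(dx)
  set J : ℝ → ℝ := fun t => ∫ x in Set.Ioi (0:ℝ), fp (x - t) ∂ν with hJ_def
  have hJeq : ∀ t : ℝ, 0 ≤ t →
      (∫ x in Set.Ioi t, f (x - t) ∂ν) = J t := by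
    intro t ht
    have h1 : (∫ x in Set.Ioi t, f (x - t) ∂ν) = ∫ x in Set.Ioi t, fp (x - t) ∂ν := by
      apply setIntegral_congr_fun measurableSet_Ioi
      intro x hx
      rw [Set.mem_Ioi] at hx
      exact (hfp_of_nonneg (x - t) (by linarith)).symm
    have h2 : Set.Ioi (0:ℝ) = Set.Ioc 0 t ∪ Set.Ioi t := (Set.Ioc_union_Ioi_eq_Ioi ht).symm
    have h3 : (∫ x in Set.Ioc 0 t, fp (x - t) ∂ν) = 0 := by
      rw [setIntegral_congr_fun measurableSet_Ioc
        (g := fun _ => (0:ℝ)) (fun x hx => hfp_of_nonpos (x - t) (by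
          rw [Set.mem_Ioc] at hx; linarith [hx.2]))]
      simp
    have h4 : IntegrableOn (fun x => fp (x - t)) (Set.Ioc 0 t) ν :=
      MeasureTheory.IntegrableOn.mono_set (hfpint t ht) Set.Ioc_subset_Ioi_self
    have h5 : IntegrableOn (fun x => fp (x - t)) (Set.Ioi t) ν :=
      MeasureTheory.IntegrableOn.mono_set (hfpint t ht) (fun x hx => by
        rw [Set.mem_Ioi] at *; linarith)
    simp only [hJ_def]
    rw [h2, setIntegral_union (Set.Ioc_disjoint_Ioi le_rfl) measurableSet_Ioi h4 h5, h3,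
      zero_add, h1]
  -- F in terms of J
  have hFrep : ∀ c : ℝ, c ≤ Real.log K →
      F c = K * (1 - ψ φ / φ) + α / φ + β * Real.exp c / (φ + 1)
        + K * J (Real.log K - c) := by
    intro c hc
    rw [hF c, hJeq (Real.log K - c) (by linarith)]
  -- continuity of J at positive points
  have hJcont : ∀ t₀ : ℝ, 0 < t₀ → ContinuousAt J t₀ := by
    intro t₀ ht₀
    apply continuousAt_of_dominated (bound := G)
    · exact Filter.Eventually.of_forall fun t =>
        ((hfpc.comp (continuous_id.sub continuous_const)).aestronglyMeasurable)
    · filter_upwards [eventually_gt_nhds ht₀] with t ht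
      exact (ae_restrict_mem measurableSet_Ioi).mono (fun x hx => hfpbd t ht.le x hx)
    · exact hGint
    · exact ae_of_all _ fun x =>
        (hfpc.comp (continuous_const.sub continuous_id)).continuousAt
  -- Part 1 : continuity
  have part1 : ContinuousOn F (Set.Iio (Real.log K)) := by
    intro c hc
    rw [Set.mem_Iio] at hc
    apply ContinuousAt.continuousWithinAt
    have hcont : ContinuousAt (fun c => K * (1 - ψ φ / φ) + α / φ +
        β * Real.exp c / (φ + 1) + K * J (Real.log K - c)) c := by
      apply ContinuousAt.add
      · apply ContinuousAt.add
        · exact continuousAt_const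
        · exact (((Real.continuous_exp.continuousAt).const_mul β).div_const (φ + 1))
      · exact ((hJcont (Real.log K - c) (by linarith)).comp
          ((continuous_const.sub continuous_id).continuousAt)).const_mul K
    apply hcont.congr
    filter_upwards [eventually_lt_nhds hc] with c' hc'
    exact (hFrep c' hc'.le).symm
  -- Part 2 : strict monotonicity
  have part2 : StrictMonoOn F (Set.Iio (Real.log K)) := by
    intro c₁ h₁ c₂ h₂ hlt
    rw [Set.mem_Iio] at h₁ h₂
    rw [hFrep c₁ h₁.le, hFrep c₂ h₂.le]
    have hJle : J (Real.log K - c₁) ≤ J (Real.log K - c₂) := by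
      simp only [hJ_def]
      apply integral_mono (hfpint _ (by linarith)) (hfpint _ (by linarith))
      intro x
      exact hfpmono (by linarith)
    have hexplt : β * Real.exp c₁ / (φ + 1) < β * Real.exp c₂ / (φ + 1) := by
      have h := Real.exp_lt_exp.2 hlt
      have h2 : β * Real.exp c₁ < β * Real.exp c₂ := by nlinarith
      exact div_lt_div_of_pos_right h2 hφ1
    
    have hKJ : K * J (Real.log K - c₁) ≤ K * J (Real.log K - c₂) :=
      mul_le_mul_of_nonneg_left hJle hK.le
    linarith
  -- Part 3 : limit at -∞
  have hJtop : Tendsto J atTop (nhds 0) := by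
    have h := tendsto_integral_filter_of_dominated_convergence (μ := ν.restrict (Set.Ioi 0))
      (l := atTop) (F := fun t x => fp (x - t)) (f := fun _ => (0:ℝ)) G
      (Filter.Eventually.of_forall fun t =>
        ((hfpc.comp (continuous_id.sub continuous_const)).aestronglyMeasurable))
      (by
        filter_upwards [eventually_ge_atTop (0:ℝ)] with t ht
        exact (ae_restrict_mem measurableSet_Ioi).mono (fun x hx => hfpbd t ht x hx))
      hGint
      (ae_of_all _ fun x => by
        apply Tendsto.congr' (f₁ := fun _ => (0:ℝ))
        · filter_upwards [eventually_ge_atTop x] with t ht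
          exact (hfp_of_nonpos (x - t) (by linarith)).symm
        · exact tendsto_const_nhds)
    simpa using h
  have part3 : Tendsto F atBot (nhds (K - (ψ φ * K - α) / φ)) := by
    have htmap : Tendsto (fun c : ℝ => Real.log K - c) atBot atTop := by
      have := tendsto_atTop_add_const_left (f := fun c : ℝ => -c) (l := atBot)
        (Real.log K) tendsto_neg_atBot_atTop
      simpa [sub_eq_add_neg] using this
    have hlim : Tendsto (fun c => K * (1 - ψ φ / φ) + α / φ +
        β * Real.exp c / (φ + 1) + K * J (Real.log K - c)) atBot
        (nhds (K * (1 - ψ φ / φ) + α / φ + β * 0 / (φ + 1) + K * 0)) := by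
      apply Tendsto.add
      · apply Tendsto.add
        · exact tendsto_const_nhds
        · exact (Real.tendsto_exp_atBot.const_mul β).div_const (φ + 1)
      · exact (hJtop.comp htmap).const_mul K
    have hval : K * (1 - ψ φ / φ) + α / φ + β * 0 / (φ + 1) + K * 0
        = K - (ψ φ * K - α) / φ := by field_simp; ring
    rw [← hval]
    apply hlim.congr'
    filter_upwards [eventually_le_atBot (Real.log K)] with c hc
    exact (hFrep c hc).symm
  -- Part 4 : limit at log K
  have hJ0 : Tendsto J (nhdsWithin 0 (Set.Ioi 0)) (nhds (J 0)) := by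
    apply tendsto_integral_filter_of_dominated_convergence (μ := ν.restrict (Set.Ioi 0))
      (F := fun t x => fp (x - t)) (f := fun x => fp (x - 0)) G
    · exact Filter.Eventually.of_forall fun t =>
        ((hfpc.comp (continuous_id.sub continuous_const)).aestronglyMeasurable)
    · filter_upwards [self_mem_nhdsWithin] with t ht
      rw [Set.mem_Ioi] at ht
      exact (ae_restrict_mem measurableSet_Ioi).mono (fun x hx => hfpbd t ht.le x hx)
    · exact hGint
    · apply ae_of_all _ fun x => ?_
      exact ((hfpc.comp (continuous_const.sub continuous_id)).continuousAt.tendsto).mono_left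
        nhdsWithin_le_nhds
  have hmap4 : Tendsto (fun c : ℝ => Real.log K - c)
      (nhdsWithin (Real.log K) (Set.Iio (Real.log K))) (nhdsWithin 0 (Set.Ioi 0)) := by
    apply tendsto_nhdsWithin_of_tendsto_nhds_of_eventually_within
    · have : Tendsto (fun c : ℝ => Real.log K - c) (nhds (Real.log K))
          (nhds (Real.log K - Real.log K)) :=
        (continuous_const.sub continuous_id).continuousAt
      rw [sub_self] at this
      exact this.mono_left nhdsWithin_le_nhds
    · filter_upwards [self_mem_nhdsWithin] with c hc
      rw [Set.mem_Iio] at hc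
      rw [Set.mem_Ioi]; linarith
  -- the value of J 0
  set gP : ℝ → ℝ := fun x => Real.exp (-φ * x) - 1 + φ * (if x < 1 then x else 0) with hgP_def
  set gM : ℝ → ℝ := fun x => Real.exp (-(-1) * x) - 1 + (-1) * (if x < 1 then x else 0)
    with hgM_def
  have hite : Measurable fun x : ℝ => (if x < 1 then x else 0) :=
    Measurable.ite measurableSet_Iio measurable_id measurable_const
  have hgPmeas : Measurable gP := by
    simp only [hgP_def]
    exact ((measurable_id.const_mul (-φ)).exp.sub measurable_const).add (hite.const_mul φ)
  have hgMmeas : Measurable gM := by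
    simp only [hgM_def]
    exact ((measurable_id.const_mul (-(-1))).exp.sub measurable_const).add (hite.const_mul (-1))
  -- bounds for gP and gM
  have hgPbd : ∀ x : ℝ, x ∈ Set.Ioi (0:ℝ) → ‖gP x‖ ≤ G x := by
    intro x hx
    rw [Set.mem_Ioi] at hx
    rw [Real.norm_eq_abs]
    have hind : 0 ≤ (Set.Ici (1:ℝ)).indicator Real.exp x :=
      Set.indicator_nonneg (fun y _ => (Real.exp_pos y).le) x
    rcases lt_or_ge x 1 with hx1 | hx1
    · have h5 : min 1 (x ^ 2) = x ^ 2 := min_eq_right (by nlinarith)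
      have habs : |gP x| ≤ φ ^ 2 * x ^ 2 := by
        simp only [hgP_def, if_pos hx1]
        rw [abs_le]
        constructor
        · have h1 : 1 + -(φ * x) ≤ Real.exp (-(φ * x)) := by
            have := Real.add_one_le_exp (-(φ * x)); linarith
          have h1' : 1 + -(φ * x) ≤ Real.exp (-φ * x) := by
            rw [show -φ * x = -(φ * x) by ring]; exact h1
          nlinarith
        · have h2 : Real.exp (-(φ * x)) ≤ 1 - φ * x + (φ * x) ^ 2 :=
            exp_neg_quad (φ * x) (by positivity)
          have h2' : Real.exp (-φ * x) ≤ 1 - φ * x + (φ * x) ^ 2 := by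
            rw [show -φ * x = -(φ * x) by ring]; exact h2
          nlinarith
      have hC2 : φ ^ 2 ≤ C := by simp only [hC_def]; nlinarith [Real.exp_pos 1, hφ]
      simp only [hG_def, h5]
      nlinarith [sq_nonneg x]
    · have h5 : min 1 (x ^ 2) = 1 := min_eq_left (by nlinarith)
      have h6 : (Set.Ici (1:ℝ)).indicator Real.exp x = Real.exp x :=
        Set.indicator_of_mem (by simpa using hx1) _
      have habs : |gP x| ≤ 1 := by
        simp only [hgP_def, if_neg (not_lt.2 hx1)]
        rw [abs_le]
        have h7 : Real.exp (-φ * x) ≤ 1 := Real.exp_le_one_iff.2 (by nlinarith)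
        have h8 : 0 < Real.exp (-φ * x) := Real.exp_pos _
        constructor <;> [nlinarith; nlinarith]
      have hC3 : (1:ℝ) ≤ C := by simp only [hC_def]; nlinarith [Real.exp_pos 1]
      simp only [hG_def, h5, h6, mul_one]
      nlinarith [Real.exp_pos x]
  have hgMbd : ∀ x : ℝ, x ∈ Set.Ioi (0:ℝ) → ‖gM x‖ ≤ G x := by
    intro x hx
    rw [Set.mem_Ioi] at hx
    rw [Real.norm_eq_abs]
    have hind : 0 ≤ (Set.Ici (1:ℝ)).indicator Real.exp x :=
      Set.indicator_nonneg (fun y _ => (Real.exp_pos y).le) x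
    have hex1 : 1 + x ≤ Real.exp x := by have := Real.add_one_le_exp x; linarith
    rcases lt_or_ge x 1 with hx1 | hx1
    · have h5 : min 1 (x ^ 2) = x ^ 2 := min_eq_right (by nlinarith)
      have hexle : Real.exp x ≤ Real.exp 1 := Real.exp_le_exp.2 hx1.le
      have habs : |gM x| ≤ Real.exp 1 * x ^ 2 := by
        simp only [hgM_def, if_pos hx1, neg_neg, one_mul]
        rw [abs_le]
        have hq := exp_sub_one_sub_le x hx.le
        constructor
        · nlinarith [Real.exp_pos 1, sq_nonneg x]
        · nlinarith [Real.exp_pos x]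
      have hC2 : Real.exp 1 ≤ C := by simp only [hC_def]; nlinarith [Real.exp_pos 1, hφ]
      simp only [hG_def, h5]
      nlinarith [sq_nonneg x]
    · have h5 : min 1 (x ^ 2) = 1 := min_eq_left (by nlinarith)
      have h6 : (Set.Ici (1:ℝ)).indicator Real.exp x = Real.exp x :=
        Set.indicator_of_mem (by simpa using hx1) _
      have habs : |gM x| ≤ Real.exp x := by
        simp only [hgM_def, if_neg (not_lt.2 hx1), neg_neg, one_mul]
        rw [abs_le]
        constructor <;> nlinarith [Real.exp_pos x]
      simp only [hG_def, h5, h6, mul_one]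
      nlinarith [Real.exp_pos x]
  have hgPint : Integrable gP (ν.restrict (Set.Ioi 0)) := by
    refine hGint.mono' hgPmeas.aestronglyMeasurable ?_
    exact (ae_restrict_mem measurableSet_Ioi).mono hgPbd
  have hgMint : Integrable gM (ν.restrict (Set.Ioi 0)) := by
    refine hGint.mono' hgMmeas.aestronglyMeasurable ?_
    exact (ae_restrict_mem measurableSet_Ioi).mono hgMbd
  -- pointwise identity
  have hpt : ∀ x : ℝ, f x = gP x / φ + (gM x - gP x) / (φ + 1) := by
    intro x
    rw [hf]
    simp only [hgP_def, hgM_def, neg_neg, one_mul]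
    have hA : Real.exp (-(φ + 1) * x) = Real.exp (-φ * x) / Real.exp x := by
      rw [eq_div_iff (Real.exp_ne_zero x), ← Real.exp_add]
      congr 1; ring
    rw [hA]
    generalize (if x < 1 then x else 0) = w
    have h5 := Real.exp_ne_zero x
    have hφ0 : φ ≠ 0 := ne_of_gt hφ
    have hφ10 : φ + 1 ≠ 0 := ne_of_gt hφ1
    field_simp
    ring
  -- value of J 0
  have hJ0val : J 0 = (∫ x in Set.Ioi (0:ℝ), gP x ∂ν) / φ
      + ((∫ x in Set.Ioi (0:ℝ), gM x ∂ν) - ∫ x in Set.Ioi (0:ℝ), gP x ∂ν) / (φ + 1) := by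
    have h1 : J 0 = ∫ x in Set.Ioi (0:ℝ), f x ∂ν := by
      simp only [hJ_def]
      apply setIntegral_congr_fun measurableSet_Ioi
      intro x hx
      rw [Set.mem_Ioi] at hx
      show fp (x - 0) = f x
      rw [sub_zero]
      exact hfp_of_nonneg x hx.le
    rw [h1]
    have h2 : (∫ x in Set.Ioi (0:ℝ), f x ∂ν)
        = ∫ x in Set.Ioi (0:ℝ), (gP x / φ + (gM x - gP x) / (φ + 1)) ∂ν := by
      apply setIntegral_congr_fun measurableSet_Ioi
      intro x _
      exact hpt x
    have i1 : Integrable (fun x => gP x / φ) (ν.restrict (Set.Ioi 0)) := hgPint.div_const φ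
    have i2 : Integrable (fun x => (gM x - gP x) / (φ + 1)) (ν.restrict (Set.Ioi 0)) :=
      (hgMint.sub hgPint).div_const (φ + 1)
    rw [h2, integral_add i1 i2, integral_div, integral_div,
      integral_sub hgMint hgPint]
  -- assemble part 4
  have hψφ := hψ φ (by linarith)
  have hψm := hψ (-1) le_rfl
  have part4 : Tendsto F (nhdsWithin (Real.log K) (Set.Iio (Real.log K)))
      (nhds (K + α / φ + K * (β + ψ (-1) - ψ φ) / (φ + 1) - K * b ^ 2 / 2)) := by
    have hlim : Tendsto (fun c => K * (1 - ψ φ / φ) + α / φ +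
        β * Real.exp c / (φ + 1) + K * J (Real.log K - c))
        (nhdsWithin (Real.log K) (Set.Iio (Real.log K)))
        (nhds (K * (1 - ψ φ / φ) + α / φ + β * K / (φ + 1) + K * J 0)) := by
      apply Tendsto.add
      · apply Tendsto.add
        · exact tendsto_const_nhds
        · have : Tendsto (fun c : ℝ => β * Real.exp c / (φ + 1)) (nhds (Real.log K))
              (nhds (β * Real.exp (Real.log K) / (φ + 1))) :=
            ((Real.continuous_exp.continuousAt.const_mul β).div_const (φ + 1))
          rw [Real.exp_log hK] at this
          exact this.mono_left nhdsWithin_le_nhds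
      · have := (hJ0.comp hmap4).const_mul K
        simpa using this
    have hval : K * (1 - ψ φ / φ) + α / φ + β * K / (φ + 1) + K * J 0
        = K + α / φ + K * (β + ψ (-1) - ψ φ) / (φ + 1) - K * b ^ 2 / 2 := by
      rw [hJ0val]
      rw [hψφ, hψm]
      simp only [hgP_def, hgM_def]
      have hφ0 : φ ≠ 0 := ne_of_gt hφ
      have hφ10 : φ + 1 ≠ 0 := ne_of_gt hφ1
      field_simp
      ring
    rw [← hval]
    apply hlim.congr'
    filter_upwards [self_mem_nhdsWithin] with c hc
    rw [Set.mem_Iio] at hc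
    exact (hFrep c hc.le).symm
  exact ⟨part1, part2, part3, part4⟩
end

section
/- Let Π be a measure on ℝ concentrated on (0,∞) satisfying ∫_{(0,∞)} min(1, x²) Π(dx) < ∞ and ∫_{[1,∞)} e^{x} Π(dx) < ∞, let μ ∈ ℝ, b ≥ 0, ψ(θ) = μθ + (b²/2)θ² + ∫_{(0,∞)} (e^{−θx} − 1 + θx·1_{{x<1}}) Π(dx), let φ > 0 with q := ψ(φ), and let α, β, K > 0. Assume q > α/K and α/φ + K(ψ(−1) + β − q)/(φ+1) > Kb²/2. Then the equation qK/φ = α/φ + βe^{c}/(φ+1) + K·∫_{(log K − c, ∞)} f(x − (log K − c)) Π(dx), where f(z) = e^z(1 − e^{−(φ+1)z})/(φ+1) − (1 − e^{−φz})/φ, has a unique solution c* in (−∞, log K). -/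
open MeasureTheory Real Set Filter


lemma aux_B1 (t : ℝ) (ht : 0 ≤ t) : 0 ≤ Real.exp (-t) - 1 + t ∧ Real.exp (-t) - 1 + t ≤ t ^ 2 := by
  have h1 := Real.add_one_le_exp (-t)
  have h2 := Real.add_one_le_exp t
  have h3 : Real.exp (-t) * Real.exp t = 1 := by rw [← Real.exp_add]; simp
  have h4 : Real.exp (-t) * (1 + t) ≤ 1 := by
    calc Real.exp (-t) * (1 + t) ≤ Real.exp (-t) * Real.exp t := by
          apply mul_le_mul_of_nonneg_left (by linarith) (Real.exp_pos _).le
      _ = 1 := h3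
  exact ⟨by linarith, by nlinarith [Real.exp_pos (-t)]⟩

lemma aux_B2 (x : ℝ) (h0 : 0 ≤ x) (h1 : x ≤ 1) :
    0 ≤ Real.exp x - 1 - x ∧ Real.exp x - 1 - x ≤ x ^ 2 := by
  have hlb := Real.add_one_le_exp x
  have hub := Real.exp_bound (x := x) (by rw [abs_of_nonneg h0]; exact h1) (n := 2) (by norm_num)
  have hs : ∑ m ∈ Finset.range 2, x ^ m / (m.factorial : ℝ) = 1 + x := by
    simp [Finset.sum_range_succ]
  rw [hs, abs_of_nonneg h0] at hub
  norm_num [Nat.factorial] at hub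

  have := abs_le.mp hub
  exact ⟨by linarith, by nlinarith [sq_nonneg x]⟩

noncomputable def f₀ (φ z : ℝ) : ℝ :=
  Real.exp z * (1 - Real.exp (-(φ + 1) * z)) / (φ + 1) - (1 - Real.exp (-φ * z)) / φ

lemma f₀_zero (φ : ℝ) : f₀ φ 0 = 0 := by simp [f₀]

lemma f₀_cont (φ : ℝ) : Continuous (f₀ φ) := by
  unfold f₀; fun_prop

lemma f₀_alt (φ : ℝ) (z : ℝ) :
    f₀ φ z = (Real.exp z - Real.exp (-φ * z)) / (φ + 1) - (1 - Real.exp (-φ * z)) / φ := by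
  unfold f₀
  have h : Real.exp z * Real.exp (-(φ + 1) * z) = Real.exp (-φ * z) := by
    rw [← Real.exp_add]; ring_nf
  rw [mul_sub, mul_one, h]

lemma f₀_hasDeriv (φ : ℝ) (hφ : 0 < φ) (z : ℝ) :
    HasDerivAt (f₀ φ) ((Real.exp z - Real.exp (-φ * z)) / (φ + 1)) z := by
  have hφ1 : (φ:ℝ) + 1 ≠ 0 := by positivity
  have hφ0 : φ ≠ 0 := ne_of_gt hφ
  have h1 : HasDerivAt (fun z : ℝ => Real.exp z) (Real.exp z) z := Real.hasDerivAt_exp z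
  have h2 : HasDerivAt (fun z : ℝ => Real.exp (-φ * z)) (Real.exp (-φ * z) * (-φ)) z :=
    by simpa using ((hasDerivAt_id z).const_mul (-φ)).exp
  have key : HasDerivAt (fun w => (Real.exp w - Real.exp (-φ * w)) / (φ + 1) - (1 - Real.exp (-φ * w)) / φ)
      ((Real.exp z - Real.exp (-φ * z)) / (φ + 1)) z := by
    have h3 := ((h1.sub h2).div_const (φ + 1)).sub (((hasDerivAt_const z (1:ℝ)).sub h2).div_const φ)
    convert h3 using 1
    · rfl
    · rfl
    · rfl
    field_simp
    ring
  exact key.congr_of_eventuallyEq (Filter.Eventually.of_forall (f₀_alt φ))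

lemma f₀_mono (φ : ℝ) (hφ : 0 < φ) : MonotoneOn (f₀ φ) (Set.Ici 0) := by
  apply monotoneOn_of_deriv_nonneg (convex_Ici 0) (f₀_cont φ).continuousOn
  · intro x _; exact (f₀_hasDeriv φ hφ x).differentiableAt.differentiableWithinAt
  · intro x hx
    rw [interior_Ici] at hx
    rw [(f₀_hasDeriv φ hφ x).deriv]
    have h : -φ * x ≤ x := by nlinarith [(Set.mem_Ioi.mp hx).le]
    have := Real.exp_le_exp.mpr h
    apply div_nonneg (by linarith) (by linarith)

lemma f₀_nonneg (φ : ℝ) (hφ : 0 < φ) {z : ℝ} (hz : 0 ≤ z) : 0 ≤ f₀ φ z := by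
  have := f₀_mono φ hφ (Set.self_mem_Ici) hz hz
  rwa [f₀_zero] at this

lemma f₀_le_exp (φ : ℝ) (hφ : 0 < φ) {z : ℝ} (hz : 0 ≤ z) : f₀ φ z ≤ Real.exp z := by
  rw [f₀_alt]
  have h1 : Real.exp (-φ * z) ≤ 1 := Real.exp_le_one_iff.mpr (by nlinarith)
  have h2 : 0 < Real.exp (-φ * z) := Real.exp_pos _
  have h3 : 0 < Real.exp z := Real.exp_pos _
  have : (Real.exp z - Real.exp (-φ * z)) / (φ + 1) ≤ Real.exp z := by
    rw [div_le_iff₀ (by linarith)]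
    nlinarith
  have h4 : 0 ≤ (1 - Real.exp (-φ * z)) / φ := div_nonneg (by linarith) hφ.le
  linarith

-- decomposition into Lévy pieces
lemma f₀_decomp (φ : ℝ) (hφ : 0 < φ) (x : ℝ) :
    f₀ φ x = (Real.exp x - 1 - (if x < 1 then x else 0)) / (φ + 1)
      + (Real.exp (-φ * x) - 1 + φ * (if x < 1 then x else 0)) / (φ * (φ + 1)) := by
  rw [f₀_alt]
  have hφ1 : (φ:ℝ) + 1 ≠ 0 := by positivity
  have hφ0 : φ ≠ 0 := ne_of_gt hφ
  rcases lt_or_ge x 1 with h | h <;> simp only [if_pos, if_neg, h, not_lt] <;> field_simp <;> ring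

lemma f₀_le_sq (φ : ℝ) (hφ : 0 < φ) {x : ℝ} (h0 : 0 ≤ x) (h1 : x < 1) : f₀ φ x ≤ x ^ 2 := by
  rw [f₀_decomp φ hφ, if_pos h1]
  obtain ⟨hB2a, hB2b⟩ := aux_B2 x h0 h1.le
  have e1 : Real.exp (-φ * x) - 1 + φ * x = Real.exp (-(φ * x)) - 1 + φ * x := by ring_nf
  obtain ⟨hB1a, hB1b⟩ := aux_B1 (φ * x) (by positivity)
  rw [e1]
  have hφ1 : (0:ℝ) < φ + 1 := by linarith
  have t1 : (Real.exp x - 1 - x) / (φ + 1) ≤ x ^ 2 / (φ + 1) := by gcongr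
  have t2 : (Real.exp (-(φ * x)) - 1 + φ * x) / (φ * (φ + 1)) ≤ (φ * x) ^ 2 / (φ * (φ + 1)) := by
    gcongr
  have key : x ^ 2 / (φ + 1) + (φ * x) ^ 2 / (φ * (φ + 1)) = x ^ 2 := by
    field_simp
    ring
  linarith

lemma aux_iden (φ K A B μ b α β : ℝ) (hφ : 0 < φ) (hφ1 : (0:ℝ) < φ + 1) :
    α / φ + β * K / (φ + 1) + K * (A / (φ + 1) + B / (φ * (φ + 1)))
        - (μ * φ + b ^ 2 / 2 * φ ^ 2 + B) * K / φ
        = α / φ + K * ((-μ + b ^ 2 / 2 + A) + β - (μ * φ + b ^ 2 / 2 * φ ^ 2 + B)) / (φ + 1)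
          - K * b ^ 2 / 2 := by
  field_simp
  ring


set_option maxHeartbeats 2000000 in
/-- Theorem 4(i) of the paper: under q > α/K and
α/φ + K(ψ(−1)+β−q)/(φ+1) > Kb²/2 (with q = ψ(φ)), the functional equation
qK/φ = α/φ + βe^c/(φ+1) + K·∫_{(log K−c,∞)} f(x−(log K−c)) Π(dx)
has a unique solution c* in (−∞, log K). -/
theorem stmt_14 (ν : Measure ℝ)
    (hconc : ν (Set.Ioi (0:ℝ))ᶜ = 0)
    (hlevy : ∫⁻ x in Set.Ioi (0:ℝ), ENNReal.ofReal (min 1 (x ^ 2)) ∂ν < ⊤)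
    (hexp : ∫⁻ x in Set.Ici (1:ℝ), ENNReal.ofReal (Real.exp x) ∂ν < ⊤)
    (μ b : ℝ) (hb : 0 ≤ b)
    (ψ : ℝ → ℝ)
    (hψ : ∀ θ : ℝ, -1 ≤ θ →
      ψ θ = μ * θ + b ^ 2 / 2 * θ ^ 2 +
        ∫ x in Set.Ioi (0:ℝ),
          (Real.exp (-θ * x) - 1 + θ * (if x < 1 then x else 0)) ∂ν)
    (φ : ℝ) (hφ : 0 < φ)
    (α β K : ℝ) (hα : 0 < α) (hβ : 0 < β) (hK : 0 < K)
    (f : ℝ → ℝ)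
    (hf : ∀ z : ℝ, f z =
      Real.exp z * (1 - Real.exp (-(φ + 1) * z)) / (φ + 1)
        - (1 - Real.exp (-φ * z)) / φ)
    (hqα : α / K < ψ φ)
    (hq1 : K * b ^ 2 / 2 < α / φ + K * (ψ (-1) + β - ψ φ) / (φ + 1)) :
    ∃! c : ℝ, c < Real.log K ∧
      ψ φ * K / φ =
        α / φ + β * Real.exp c / (φ + 1)
          + K * ∫ x in Set.Ioi (Real.log K - c), f (x - (Real.log K - c)) ∂ν := by
  have hφ1 : (0:ℝ) < φ + 1 := by linarith
  have hf₀ : f = f₀ φ := funext hf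
  set L := Real.log K with hL
  -- the shifted integrand
  set F : ℝ → ℝ → ℝ := fun a x => (Set.Ioi a).indicator (fun y => f₀ φ (y - a)) x with hF
  set g : ℝ → ℝ := fun x => min 1 (x ^ 2) + (Set.Ici 1).indicator Real.exp x with hg
  set bound : ℝ → ℝ := fun x => (Set.Ioi 0).indicator g x with hbound
  have hg0 : ∀ x, 0 ≤ g x := by
    intro x
    apply add_nonneg
    · exact le_min zero_le_one (sq_nonneg x)
    · exact Set.indicator_nonneg (fun y _ => (Real.exp_pos y).le) x
  have hbound0 : ∀ x, 0 ≤ bound x := fun x =>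
    Set.indicator_nonneg (fun y _ => hg0 y) x
  -- integrability of pieces
  have h_int_min : IntegrableOn (fun x => min 1 (x ^ 2)) (Set.Ioi 0) ν := by
    constructor
    · exact (continuous_const.min (continuous_pow 2)).aestronglyMeasurable
    · rw [hasFiniteIntegral_iff_ofReal (Filter.Eventually.of_forall
        (fun x => le_min zero_le_one (sq_nonneg x)))]
      exact hlevy
  have h_int_exp : IntegrableOn Real.exp (Set.Ici 1) ν := by
    constructor
    · exact Real.continuous_exp.aestronglyMeasurable
    · rw [hasFiniteIntegral_iff_ofReal (Filter.Eventually.of_forall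
        (fun x => (Real.exp_pos x).le))]
      exact hexp
  have h_ind_exp : Integrable ((Set.Ici 1).indicator Real.exp) ν :=
    (integrable_indicator_iff measurableSet_Ici).2 h_int_exp
  have h_bound_int : Integrable bound ν := by
    rw [hbound]
    rw [integrable_indicator_iff measurableSet_Ioi]
    apply Integrable.add h_int_min
    exact h_ind_exp.integrableOn
  -- f₀ bounded by g on (0, ∞)
  have hf₀_le_g : ∀ x : ℝ, 0 < x → f₀ φ x ≤ g x := by
    intro x hx
    rcases lt_or_ge x 1 with h | h
    · have h1 : f₀ φ x ≤ x ^ 2 := f₀_le_sq φ hφ hx.le h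
      have h2 : min 1 (x ^ 2) = x ^ 2 := min_eq_right (by nlinarith)
      have h3 : (0:ℝ) ≤ (Set.Ici 1).indicator Real.exp x :=
        Set.indicator_nonneg (fun y _ => (Real.exp_pos y).le) x
      simp only [hg]
      linarith
    · have h1 : f₀ φ x ≤ Real.exp x := f₀_le_exp φ hφ (by linarith)
      have h2 : (Set.Ici 1).indicator Real.exp x = Real.exp x :=
        Set.indicator_of_mem (show x ∈ Set.Ici 1 from h) Real.exp
      have h3 : (0:ℝ) ≤ min 1 (x ^ 2) := le_min zero_le_one (sq_nonneg x)
      simp only [hg]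
      linarith
  have hFbound : ∀ a : ℝ, 0 ≤ a → ∀ x, ‖F a x‖ ≤ bound x := by
    intro a ha x
    by_cases hx : x ∈ Set.Ioi a
    · have hx0 : (0:ℝ) < x := lt_of_le_of_lt ha hx
      have hxa : 0 < x - a := sub_pos.2 hx
      have e1 : F a x = f₀ φ (x - a) := Set.indicator_of_mem hx _
      have e2 : bound x = g x := Set.indicator_of_mem hx0 _
      rw [e1, e2, Real.norm_eq_abs, abs_of_nonneg (f₀_nonneg φ hφ hxa.le)]
      calc f₀ φ (x - a) ≤ f₀ φ x := f₀_mono φ hφ hxa.le hx0.le (by linarith)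
        _ ≤ g x := hf₀_le_g x hx0
    · have e1 : F a x = 0 := Set.indicator_of_notMem hx _
      rw [e1, norm_zero]
      exact hbound0 x
  have hFmeas : ∀ a : ℝ, AEStronglyMeasurable (F a) ν := by
    intro a
    apply AEStronglyMeasurable.indicator _ measurableSet_Ioi
    exact ((f₀_cont φ).comp (continuous_id.sub continuous_const)).aestronglyMeasurable
  have hFint : ∀ a : ℝ, 0 ≤ a → Integrable (F a) ν := by
    intro a ha
    exact h_bound_int.mono' (hFmeas a) (Filter.Eventually.of_forall (hFbound a ha))
  set I : ℝ → ℝ := fun a => ∫ x, F a x ∂ν with hI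
  have hIset : ∀ a : ℝ, I a = ∫ x in Set.Ioi a, f₀ φ (x - a) ∂ν := by
    intro a
    exact integral_indicator measurableSet_Ioi
  have hFnonneg : ∀ a : ℝ, 0 ≤ a → ∀ x, 0 ≤ F a x := by
    intro a ha x
    simp only [hF]
    by_cases hx : x ∈ Set.Ioi a
    · rw [Set.indicator_of_mem hx]
      exact f₀_nonneg φ hφ (by simp only [Set.mem_Ioi] at hx; linarith)
    · rw [Set.indicator_of_notMem hx]
  have hImono : ∀ a₁ a₂ : ℝ, 0 ≤ a₂ → a₂ ≤ a₁ → I a₁ ≤ I a₂ := by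
    intro a₁ a₂ ha₂ h12
    apply integral_mono (hFint a₁ (le_trans ha₂ h12)) (hFint a₂ ha₂)
    intro x
    have hnn := hFnonneg a₂ ha₂ x
    simp only [hF]
    simp only [hF] at hnn
    by_cases hx : x ∈ Set.Ioi a₁
    · have hx2 : x ∈ Set.Ioi a₂ := lt_of_le_of_lt h12 hx
      rw [Set.indicator_of_mem hx, Set.indicator_of_mem hx2]
      have hxa : a₁ < x := hx
      exact f₀_mono φ hφ (Set.mem_Ici.2 (by linarith))
        (Set.mem_Ici.2 (by linarith)) (by linarith)
    · rw [Set.indicator_of_notMem hx]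
      exact hnn
  -- continuity of I on [0, ∞)
  have hIcont : ContinuousOn I (Set.Ici 0) := by
    intro a₀ ha₀
    apply continuousWithinAt_of_dominated (bound := bound)
    · exact Filter.Eventually.of_forall (fun a => hFmeas a)
    · apply eventually_nhdsWithin_of_forall
      intro a ha
      exact Filter.Eventually.of_forall (hFbound a ha)
    · exact h_bound_int
    · apply Filter.Eventually.of_forall
      intro x
      apply ContinuousAt.continuousWithinAt
      rcases lt_trichotomy a₀ x with hlt | heq | hgt
      · have hev : ∀ᶠ a in nhds a₀, F a x = f₀ φ (x - a) := by
          filter_upwards [Iio_mem_nhds hlt] with a ha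
          exact Set.indicator_of_mem (Set.mem_Ioi.2 ha) (fun y => f₀ φ (y - a))
        have hc : ContinuousAt (fun a => f₀ φ (x - a)) a₀ :=
          ((f₀_cont φ).comp (continuous_const.sub continuous_id)).continuousAt
        exact hc.congr (hev.mono (fun a ha => ha.symm))
      · have hzero : F a₀ x = 0 :=
          Set.indicator_of_notMem (by simp [heq]) (fun y => f₀ φ (y - a₀))
        show Tendsto (fun a => F a x) (nhds a₀) (nhds (F a₀ x))
        rw [hzero]
        apply squeeze_zero_norm (a := fun a => |f₀ φ (x - a)|)
        · intro a
          by_cases hx : x ∈ Set.Ioi a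
          · rw [show F a x = f₀ φ (x - a) from
              Set.indicator_of_mem hx (fun y => f₀ φ (y - a)), Real.norm_eq_abs]
          · rw [show F a x = 0 from
              Set.indicator_of_notMem hx (fun y => f₀ φ (y - a)), norm_zero]
            exact abs_nonneg _
        · have hc : Continuous (fun a => |f₀ φ (x - a)|) :=
            ((f₀_cont φ).comp (continuous_const.sub continuous_id)).abs
          have := hc.tendsto a₀
          simpa [heq, f₀_zero] using this
      · have hev : ∀ᶠ a in nhds a₀, F a x = 0 := by
          filter_upwards [Ioi_mem_nhds hgt] with a ha
          exact Set.indicator_of_notMem (by simp only [Set.mem_Ioi]; exact not_lt.2 ha.le) _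
        exact continuousAt_const.congr (hev.mono (fun a ha => ha.symm))
  -- the two Lévy pieces
  set hm : ℝ → ℝ := fun x => Real.exp x - 1 - (if x < 1 then x else 0) with hhm
  set hp : ℝ → ℝ := fun x => Real.exp (-φ * x) - 1 + φ * (if x < 1 then x else 0) with hhp
  have hite_meas : Measurable (fun x : ℝ => if x < 1 then x else 0) := by
    apply Measurable.ite (measurableSet_lt measurable_id measurable_const)
      measurable_id measurable_const
  have h_hm_int : IntegrableOn hm (Set.Ioi 0) ν := by
    apply Integrable.mono' (h_int_min.add h_ind_exp.integrableOn)
    · exact ((Real.continuous_exp.measurable.sub measurable_const).sub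
        hite_meas).aestronglyMeasurable
    · rw [ae_restrict_iff' measurableSet_Ioi]
      apply Filter.Eventually.of_forall
      intro x hx
      have hx0 : (0:ℝ) < x := hx
      rcases lt_or_ge x 1 with h | h
      · obtain ⟨hB2a, hB2b⟩ := aux_B2 x hx0.le h.le
        have e1 : hm x = Real.exp x - 1 - x := by simp only [hhm, if_pos h]
        have e2 : min 1 (x ^ 2) = x ^ 2 := min_eq_right (by nlinarith)
        have e3 : (0:ℝ) ≤ (Set.Ici 1).indicator Real.exp x :=
          Set.indicator_nonneg (fun y _ => (Real.exp_pos y).le) x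
        rw [e1, Real.norm_eq_abs, abs_of_nonneg hB2a]
        simp only [Pi.add_apply]
        linarith [e2]
      · have e1 : hm x = Real.exp x - 1 := by simp only [hhm, if_neg (not_lt.2 h)]; ring
        have e2 : (Set.Ici 1).indicator Real.exp x = Real.exp x :=
          Set.indicator_of_mem (show x ∈ Set.Ici 1 from h) Real.exp
        have e3 : (1:ℝ) ≤ Real.exp x := by
          rw [show (1:ℝ) = Real.exp 0 from (Real.exp_zero).symm]
          exact Real.exp_le_exp.2 (by linarith)
        have e4 : (0:ℝ) ≤ min 1 (x ^ 2) := le_min zero_le_one (sq_nonneg x)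
        rw [e1, Real.norm_eq_abs, abs_of_nonneg (by linarith)]
        simp only [Pi.add_apply]
        linarith
  have h_hp_int : IntegrableOn hp (Set.Ioi 0) ν := by
    apply Integrable.mono' (h_int_min.const_mul (φ ^ 2 + 1))
    · apply AEStronglyMeasurable.add
      · exact ((Real.continuous_exp.comp (continuous_const.mul continuous_id)).measurable.sub
          measurable_const).aestronglyMeasurable
      · exact (hite_meas.const_mul φ).aestronglyMeasurable
    · rw [ae_restrict_iff' measurableSet_Ioi]
      apply Filter.Eventually.of_forall
      intro x hx
      have hx0 : (0:ℝ) < x := hx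
      rcases lt_or_ge x 1 with h | h
      · obtain ⟨hB1a, hB1b⟩ := aux_B1 (φ * x) (by positivity)
        have e0 : Real.exp (-φ * x) = Real.exp (-(φ * x)) := by ring_nf
        have e1 : hp x = Real.exp (-(φ * x)) - 1 + φ * x := by
          simp only [hhp, if_pos h, e0]
        have e2 : min 1 (x ^ 2) = x ^ 2 := min_eq_right (by nlinarith)
        rw [e1, Real.norm_eq_abs, abs_of_nonneg hB1a]
        beta_reduce
        rw [e2]
        nlinarith [sq_nonneg x, sq_nonneg (φ * x)]
      · have e1 : hp x = Real.exp (-φ * x) - 1 := by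
          simp only [hhp, if_neg (not_lt.2 h)]; ring
        have e2 : min 1 (x ^ 2) = 1 := min_eq_left (by nlinarith)
        have e3 : Real.exp (-φ * x) ≤ 1 := Real.exp_le_one_iff.2 (by nlinarith)
        have e4 : (0:ℝ) < Real.exp (-φ * x) := Real.exp_pos _
        rw [e1, Real.norm_eq_abs, abs_of_nonpos (by linarith)]
        beta_reduce
        rw [e2]
        nlinarith [sq_nonneg φ]
  set A := ∫ x in Set.Ioi (0:ℝ), hm x ∂ν with hAdef
  set B := ∫ x in Set.Ioi (0:ℝ), hp x ∂ν with hBdef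
  have hI0 : I 0 = A / (φ + 1) + B / (φ * (φ + 1)) := by
    rw [hIset 0]
    calc ∫ x in Set.Ioi (0:ℝ), f₀ φ (x - 0) ∂ν
        = ∫ x in Set.Ioi (0:ℝ), (hm x / (φ + 1) + hp x / (φ * (φ + 1))) ∂ν := by
          apply integral_congr_ae
          apply Filter.Eventually.of_forall
          intro x
          simp only [sub_zero, hhm, hhp]
          exact f₀_decomp φ hφ x
      _ = A / (φ + 1) + B / (φ * (φ + 1)) := by
          rw [integral_add (h_hm_int.div_const _) (h_hp_int.div_const _),
            integral_div, integral_div]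
  have hψm1 : ψ (-1) = -μ + b ^ 2 / 2 + A := by
    rw [hψ (-1) le_rfl]
    have e : ∫ x in Set.Ioi (0:ℝ),
        (Real.exp (-(-1:ℝ) * x) - 1 + (-1) * (if x < 1 then x else 0)) ∂ν = A := by
      apply integral_congr_ae
      apply Filter.Eventually.of_forall
      intro x
      simp only [hhm, neg_neg, one_mul, neg_one_mul]
      ring
    rw [e]; ring
  have hψφ : ψ φ = μ * φ + b ^ 2 / 2 * φ ^ 2 + B := by
    rw [hψ φ (by linarith)]
  have hexpL : Real.exp L = K := Real.exp_log hK
  set G : ℝ → ℝ := fun c => α / φ + β * Real.exp c / (φ + 1) + K * I (L - c) with hGdef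
  have hGL : ψ φ * K / φ < G L := by
    have hIL : I (L - L) = A / (φ + 1) + B / (φ * (φ + 1)) := by rw [sub_self]; exact hI0
    have hG : G L = α / φ + β * K / (φ + 1) + K * (A / (φ + 1) + B / (φ * (φ + 1))) := by
      simp only [hGdef]
      rw [hIL, hexpL]
    have iden := aux_iden φ K A B μ b α β hφ hφ1
    rw [hψm1, hψφ] at hq1
    rw [hG, hψφ]
    linarith [iden]
  -- tail bound and lower endpoint
  set C := ∫ x, (Set.Ici 1).indicator Real.exp x ∂ν with hCdef
  have hC0 : 0 ≤ C :=
    integral_nonneg (fun x => Set.indicator_nonneg (fun y _ => (Real.exp_pos y).le) x)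
  have htail : ∀ a : ℝ, 1 ≤ a → I a ≤ Real.exp (-a) * C := by
    intro a ha
    have hb1 : ∀ x, F a x ≤ Real.exp (-a) * (Set.Ici 1).indicator Real.exp x := by
      intro x
      by_cases hx : x ∈ Set.Ioi a
      · have hax : a < x := hx
        rw [show F a x = f₀ φ (x - a) from Set.indicator_of_mem hx (fun y => f₀ φ (y - a))]
        have hx1 : x ∈ Set.Ici 1 := le_trans ha hax.le
        rw [Set.indicator_of_mem hx1 Real.exp]
        calc f₀ φ (x - a) ≤ Real.exp (x - a) := f₀_le_exp φ hφ (by linarith)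
          _ = Real.exp (-a) * Real.exp x := by rw [← Real.exp_add]; ring_nf
      · rw [show F a x = 0 from Set.indicator_of_notMem hx (fun y => f₀ φ (y - a))]
        exact mul_nonneg (Real.exp_pos _).le
          (Set.indicator_nonneg (fun y _ => (Real.exp_pos y).le) x)
    calc I a ≤ ∫ x, Real.exp (-a) * (Set.Ici 1).indicator Real.exp x ∂ν :=
          integral_mono (hFint a (by linarith)) (h_ind_exp.const_mul _) hb1
      _ = Real.exp (-a) * C := integral_const_mul _ _
  have hδ0 : α / φ < ψ φ * K / φ := by
    have h1 : α < ψ φ * K := by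
      have := (div_lt_iff₀ hK).mp hqα
      linarith
    exact div_lt_div_of_pos_right h1 hφ
  set δ := ψ φ * K / φ - α / φ with hδdef
  have hδ : 0 < δ := by simp only [hδdef]; linarith
  set M := β / (φ + 1) + K * Real.exp (-L) * C with hMdef
  have hM0 : 0 < M := by
    have h1 : 0 < β / (φ + 1) := by positivity
    have h2 : 0 ≤ K * Real.exp (-L) * C := mul_nonneg (by positivity) hC0
    simp only [hMdef]; linarith
  set c₀ := min (L - 1) (Real.log (δ / M) - 1) with hc₀def
  have hc₀L1 : c₀ ≤ L - 1 := min_le_left _ _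
  have hc₀R : c₀ ≤ Real.log (δ / M) - 1 := min_le_right _ _
  have hδeq : ψ φ * K / φ = α / φ + δ := by rw [hδdef]; ring
  clear_value C δ M c₀
  have hc₀L : c₀ < L := by linarith
  have hGc₀ : G c₀ < ψ φ * K / φ := by
    have h1 : 1 ≤ L - c₀ := by linarith
    have h2 : I (L - c₀) ≤ Real.exp (-(L - c₀)) * C := htail _ h1
    have h3 : Real.exp (-(L - c₀)) = Real.exp c₀ * Real.exp (-L) := by
      rw [← Real.exp_add]; ring_nf
    have h4 : Real.exp c₀ * M < δ := by
      have h5 : c₀ ≤ Real.log (δ / M) - 1 := hc₀R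
      have h6 : Real.exp c₀ ≤ Real.exp (Real.log (δ / M) - 1) := Real.exp_le_exp.2 h5
      have h7 : Real.exp (Real.log (δ / M) - 1) = (δ / M) / Real.exp 1 := by
        rw [Real.exp_sub, Real.exp_log (div_pos hδ hM0)]
      have hexp1 : (1:ℝ) < Real.exp 1 := by linarith [Real.add_one_le_exp 1]
      have h8 : (δ / M) / Real.exp 1 < δ / M := div_lt_self (div_pos hδ hM0) hexp1
      have h9 : Real.exp c₀ < δ / M := lt_of_le_of_lt (h6.trans_eq h7) h8
      calc Real.exp c₀ * M < (δ / M) * M := mul_lt_mul_of_pos_right h9 hM0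
        _ = δ := div_mul_cancel₀ δ hM0.ne'
    have h10 : K * I (L - c₀) ≤ Real.exp c₀ * (K * Real.exp (-L) * C) := by
      calc K * I (L - c₀) ≤ K * (Real.exp (-(L - c₀)) * C) :=
            mul_le_mul_of_nonneg_left h2 hK.le
        _ = Real.exp c₀ * (K * Real.exp (-L) * C) := by rw [h3]; ring
    have h11 : Real.exp c₀ * (β / (φ + 1)) + Real.exp c₀ * (K * Real.exp (-L) * C)
        = Real.exp c₀ * M := by rw [hMdef]; ring
    have h12 : β * Real.exp c₀ / (φ + 1) = Real.exp c₀ * (β / (φ + 1)) := by ring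
    simp only [hGdef]
    rw [h12]
    linarith
  -- continuity of G on [c₀, L]
  have hGcont : ContinuousOn G (Set.Icc c₀ L) := by
    simp only [hGdef]
    apply ContinuousOn.add
    · apply ContinuousOn.add continuousOn_const
      exact (continuous_const.mul Real.continuous_exp).continuousOn.div_const _
    · apply ContinuousOn.mul continuousOn_const
      apply hIcont.comp ((continuous_const.sub continuous_id).continuousOn)
      intro c hc
      exact Set.mem_Ici.2 (sub_nonneg.2 hc.2)
  obtain ⟨c, hcIoo, hGc⟩ := intermediate_value_Ioo hc₀L.le hGcont ⟨hGc₀, hGL⟩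
  -- assemble
  have hGform : ∀ y : ℝ, (ψ φ * K / φ =
      α / φ + β * Real.exp y / (φ + 1)
        + K * ∫ x in Set.Ioi (L - y), f (x - (L - y)) ∂ν) ↔ ψ φ * K / φ = G y := by
    intro y
    rw [hf₀, ← hIset (L - y)]
  have hGmono : ∀ c₁ c₂ : ℝ, c₁ < c₂ → c₂ ≤ L → G c₁ < G c₂ := by
    intro c₁ c₂ h12 h2L
    have hI12 : I (L - c₁) ≤ I (L - c₂) := hImono _ _ (by linarith) (by linarith)
    have he : Real.exp c₁ < Real.exp c₂ := Real.exp_lt_exp.2 h12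
    have h1 : β * Real.exp c₁ / (φ + 1) < β * Real.exp c₂ / (φ + 1) :=
      div_lt_div_of_pos_right (by nlinarith) hφ1
    have h2 : K * I (L - c₁) ≤ K * I (L - c₂) := mul_le_mul_of_nonneg_left hI12 hK.le
    simp only [hGdef]
    linarith
  refine ⟨c, ⟨hcIoo.2, ?_⟩, ?_⟩
  · exact (hGform c).2 hGc.symm
  · intro y hy
    obtain ⟨hyL, hyeq⟩ := hy
    have hGy : ψ φ * K / φ = G y := (hGform y).1 hyeq
    rcases lt_trichotomy y c with h | h | h
    · exfalso
      have := hGmono y c h hcIoo.2.le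
      rw [← hGy, ← hGc] at this
      exact lt_irrefl _ this
    · exact h
    · exfalso
      have := hGmono c y h hyL.le
      rw [← hGy, ← hGc] at this
      exact lt_irrefl _ this
end

section
/- Let Π be a measure on ℝ concentrated on (0,∞), let φ > 0, K > 0 and c < log K, and set a = log K − c > 0. Then, as an identity of integrals with values in [0,∞], ∫_{(0,∞)} ( ∫_{−∞}^{0} e^{φy} (e^{c+u+y} − K) · 1_{{u+y > a}} dy ) Π(du) = K ∫_{(a,∞)} f(u − a) Π(du), where f(z) = e^z(1 − e^{−(φ+1)z})/(φ+1) − (1 − e^{−φz})/φ; in particular the inner integrand is nonnegative since u + y > a implies e^{c+u+y} > K. -/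
open MeasureTheory Real Set Filter

lemma stmt_15_exp_int (r s : ℝ) (hr : r ≠ 0) :
    ∫ x in s..(0:ℝ), Real.exp (r*x) = (1 - Real.exp (r*s))/r := by
  have h : ∀ x ∈ Set.uIcc s (0:ℝ), HasDerivAt (fun x => Real.exp (r*x)/r) (Real.exp (r*x)) x := by
    intro x _
    have h1 : HasDerivAt (fun x : ℝ => r*x) r x := by simpa using (hasDerivAt_id x).const_mul r
    have := h1.exp.div_const r
    simpa [mul_div_assoc, mul_div_cancel_right₀, hr] using this
  rw [intervalIntegral.integral_eq_sub_of_hasDerivAt h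
    ((Real.continuous_exp.comp (continuous_const.mul continuous_id)).intervalIntegrable s 0)]
  simp [sub_div]

lemma stmt_15_inner (φ K c a : ℝ) (hφ : 0 < φ) (hK : 0 < K)
    (ha : a = Real.log K - c) (f : ℝ → ℝ)
    (hf : ∀ z : ℝ, f z =
      Real.exp z * (1 - Real.exp (-(φ + 1) * z)) / (φ + 1)
        - (1 - Real.exp (-φ * z)) / φ)
    (u : ℝ) (hu : a < u) :
    (∫⁻ y in Set.Iio (0:ℝ),
          ENNReal.ofReal
            (if a < u + y then Real.exp (φ * y) * (Real.exp (c + u + y) - K) else 0))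
      = ENNReal.ofReal (K * f (u - a)) := by
  have hca : Real.exp (c + a) = K := by rw [ha]; simp [Real.exp_log hK]
  set g : ℝ → ℝ := fun y => Real.exp (φ * y) * (Real.exp (c + u + y) - K) with hg
  have hind : ∀ y : ℝ, ENNReal.ofReal (if a < u + y then g y else 0)
      = (Set.Ioi (a - u)).indicator (fun y => ENNReal.ofReal (g y)) y := by
    intro y
    by_cases h : a < u + y
    · rw [Set.indicator_of_mem (by simpa [Set.mem_Ioi] using by linarith)]
      simp [h]
    · rw [Set.indicator_of_notMem (by simp [Set.mem_Ioi]; linarith)]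
      simp [h]
  change (∫⁻ y in Set.Iio (0:ℝ), ENNReal.ofReal (if a < u + y then g y else 0)) = _
  simp_rw [hind]
  rw [lintegral_indicator measurableSet_Ioi]
  have hIooset : Set.Iio (0:ℝ) ∩ Set.Ioi (a - u) = Set.Ioo (a-u) 0 := by
    ext x; simp [Set.mem_Ioo, and_comm]
  rw [Measure.restrict_restrict measurableSet_Ioi, Set.inter_comm, hIooset]
  have hau : a - u < 0 := by linarith
  have hpos : ∀ y ∈ Set.Ioo (a-u) 0, 0 ≤ g y := by
    intro y hy
    have : Real.log K < c + u + y := by rw [ha] at *; linarith [hy.1]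
    have hKe : K < Real.exp (c + u + y) := by
      calc K = Real.exp (Real.log K) := (Real.exp_log hK).symm
      _ < _ := Real.exp_lt_exp.mpr this
    have h2 : 0 ≤ Real.exp (c + u + y) - K := by linarith
    exact mul_nonneg (Real.exp_pos _).le h2
  have hcont : Continuous g := by
    fun_prop
  have hInt : IntegrableOn g (Set.Ioo (a-u) 0) :=
    hcont.integrableOn_Icc.mono_set Set.Ioo_subset_Icc_self
  rw [← ofReal_integral_eq_lintegral_ofReal hInt
    ((ae_restrict_iff' measurableSet_Ioo).mpr (Filter.Eventually.of_forall hpos))]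
  congr 1
  rw [← MeasureTheory.integral_Ioc_eq_integral_Ioo,
    ← intervalIntegral.integral_of_le hau.le]
  have heq : ∀ y : ℝ, g y = Real.exp (c+u) * Real.exp ((φ+1)*y) - K * Real.exp (φ*y) := by
    intro y
    have h : Real.exp (c+u) * Real.exp ((φ+1)*y) = Real.exp (φ*y) * Real.exp (c+u+y) := by
      rw [← Real.exp_add, ← Real.exp_add]; congr 1; ring
    simp only [hg, h]; ring
  simp_rw [heq]
  rw [intervalIntegral.integral_sub
      ((by fun_prop : Continuous fun y => Real.exp (c+u) * Real.exp ((φ+1)*y)).intervalIntegrable _ _)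
      ((by fun_prop : Continuous fun y => K * Real.exp (φ*y)).intervalIntegrable _ _),
    intervalIntegral.integral_const_mul, intervalIntegral.integral_const_mul,
    stmt_15_exp_int _ _ (by positivity), stmt_15_exp_int _ _ hφ.ne']
  rw [hf]
  have h1 : Real.exp (c + u) = K * Real.exp (u - a) := by
    rw [← hca, ← Real.exp_add]; congr 1; ring
  have h2 : (φ+1)*(a-u) = -(φ+1)*(u-a) := by ring
  have h3 : φ*(a-u) = -φ*(u-a) := by ring
  rw [h1, h2, h3]
  ring

/-- The double-integral identity (in [0,∞]):
∫_{(0,∞)} (∫_{−∞}^0 e^{φy}(e^{c+u+y} − K)·1_{u+y>a} dy) Π(du)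
  = K ∫_{(a,∞)} f(u − a) Π(du), where a = log K − c; and the inner integrand
is nonnegative since u + y > a implies e^{c+u+y} > K. -/
theorem stmt_15 (ν : Measure ℝ)
    (hconc : ν (Set.Ioi (0:ℝ))ᶜ = 0)
    (φ K c : ℝ) (hφ : 0 < φ) (hK : 0 < K) (hc : c < Real.log K)
    (f : ℝ → ℝ)
    (hf : ∀ z : ℝ, f z =
      Real.exp z * (1 - Real.exp (-(φ + 1) * z)) / (φ + 1)
        - (1 - Real.exp (-φ * z)) / φ)
    (a : ℝ) (ha : a = Real.log K - c) :
    (∫⁻ u in Set.Ioi (0:ℝ),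
        (∫⁻ y in Set.Iio (0:ℝ),
          ENNReal.ofReal
            (if a < u + y then Real.exp (φ * y) * (Real.exp (c + u + y) - K) else 0))
        ∂ν)
      = ∫⁻ u in Set.Ioi a, ENNReal.ofReal (K * f (u - a)) ∂ν ∧
    ∀ u y : ℝ, a < u + y → K < Real.exp (c + u + y) := by
  have ha0 : 0 < a := by rw [ha]; linarith
  constructor
  · have hFeq : ∀ u : ℝ,
        (∫⁻ y in Set.Iio (0:ℝ),
          ENNReal.ofReal
            (if a < u + y then Real.exp (φ * y) * (Real.exp (c + u + y) - K) else 0))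
        = (Set.Ioi a).indicator (fun u => ENNReal.ofReal (K * f (u - a))) u := by
      intro u
      by_cases hu : a < u
      · rw [Set.indicator_of_mem (Set.mem_Ioi.mpr hu), stmt_15_inner φ K c a hφ hK ha f hf u hu]
      · rw [Set.indicator_of_notMem (fun h => hu (Set.mem_Ioi.mp h))]
        have : ∀ᵐ y ∂(volume.restrict (Set.Iio (0:ℝ))),
            ENNReal.ofReal
              (if a < u + y then Real.exp (φ * y) * (Real.exp (c + u + y) - K) else 0) = 0 := by
          refine (ae_restrict_iff' measurableSet_Iio).mpr (Filter.Eventually.of_forall ?_)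
          intro y hy
          have : ¬ a < u + y := by push_neg at hu ⊢; have := Set.mem_Iio.mp hy; linarith
          simp [this]
        rw [lintegral_congr_ae this, lintegral_zero]
    rw [lintegral_congr hFeq, lintegral_indicator measurableSet_Ioi,
      Measure.restrict_restrict measurableSet_Ioi]
    congr 1
    rw [Set.inter_eq_left.mpr]
    intro x hx
    exact lt_trans ha0 (Set.mem_Ioi.mp hx)
  · intro u y huy
    have : Real.log K < c + u + y := by rw [ha] at huy; linarith
    calc K = Real.exp (Real.log K) := (Real.exp_log hK).symm
    _ < _ := Real.exp_lt_exp.mpr this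
end

section
/- Let ψ : [−1,∞) → ℝ be continuous and convex with ψ(0) = 0 and ψ(θ) → ∞ as θ → ∞, let α, β, K > 0 and b ≥ 0, and let Φ(q) = sup{θ ≥ 0 : ψ(θ) = q} for q > 0. Then: (a) the map q ↦ K(q − ψ(−1) − β)/(Φ(q)+1) − α/Φ(q) is strictly increasing on (0,∞); (b) for every q > max(β + ψ(−1), 0), with a*(q) = α(Φ(q)+1)/(Φ(q)(q − ψ(−1) − β)), one has Kb²/2 + (α/Φ(q))(K/a*(q) − 1) = Kb²/2 + K(q − ψ(−1) − β)/(Φ(q)+1) − α/Φ(q); (c) consequently, for any q₀ > 0 the set {q ∈ (0, q₀) : 0 < Kb²/2 + (α/Φ(q))(K/a*(q) − 1)} is an interval. -/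
open MeasureTheory Real Set Filter

/-- (a) q ↦ K(q − ψ(−1) − β)/(Φ(q)+1) − α/Φ(q) is strictly
increasing on (0,∞); (b) for q > max(β+ψ(−1),0),
Kb²/2 + (α/Φ(q))(K/a*(q) − 1) = Kb²/2 + K(q−ψ(−1)−β)/(Φ(q)+1) − α/Φ(q);
(c) for any q₀ > 0, {q ∈ (0,q₀) : 0 < Kb²/2 + (α/Φ(q))(K/a*(q) − 1)}
is an interval (order-connected). -/
theorem stmt_16 (ψ : ℝ → ℝ)
    (hcont : ContinuousOn ψ (Set.Ici (-1:ℝ)))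
    (hconv : ConvexOn ℝ (Set.Ici (-1:ℝ)) ψ)
    (h0 : ψ 0 = 0)
    (htop : Tendsto ψ atTop atTop)
    (α β K b : ℝ) (hα : 0 < α) (hβ : 0 < β) (hK : 0 < K) (hb : 0 ≤ b)
    (Φ : ℝ → ℝ)
    (hΦ : ∀ q : ℝ, Φ q = sSup {θ : ℝ | 0 ≤ θ ∧ ψ θ = q}) :
    StrictMonoOn (fun q : ℝ => K * (q - ψ (-1) - β) / (Φ q + 1) - α / Φ q)
      (Set.Ioi (0:ℝ)) ∧
    (∀ q : ℝ, max (β + ψ (-1)) 0 < q →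
      K * b ^ 2 / 2
          + (α / Φ q) * (K / (α * (Φ q + 1) / (Φ q * (q - ψ (-1) - β))) - 1)
        = K * b ^ 2 / 2 + K * (q - ψ (-1) - β) / (Φ q + 1) - α / Φ q) ∧
    (∀ q₀ : ℝ, 0 < q₀ →
      ({q : ℝ | q ∈ Set.Ioo 0 q₀ ∧
        0 < K * b ^ 2 / 2
            + (α / Φ q) * (K / (α * (Φ q + 1) / (Φ q * (q - ψ (-1) - β))) - 1)}).OrdConnected) := by
  have hcont0 : ContinuousOn ψ (Set.Ici (0:ℝ)) :=
    hcont.mono (Set.Ici_subset_Ici.mpr (by norm_num))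
  -- key root properties of Φ
  have hroot : ∀ q : ℝ, 0 < q → 0 < Φ q ∧ ψ (Φ q) = q := by
    intro q hq
    set S : Set ℝ := {θ : ℝ | 0 ≤ θ ∧ ψ θ = q} with hS
    obtain ⟨M, hM⟩ := (htop.eventually_ge_atTop (q + 1)).exists_forall_of_atTop
    set M' : ℝ := max M 0 with hM'
    have hψM' : q + 1 ≤ ψ M' := hM M' (le_max_left _ _)
    -- nonempty
    have hne : S.Nonempty := by
      have h1 : q ∈ Set.Icc (ψ 0) (ψ M') := by
        constructor <;> [rw [h0]; skip] <;> linarith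
      obtain ⟨θ, hθ1, hθ2⟩ := intermediate_value_Icc (le_max_right M 0)
        (hcont0.mono (Set.Icc_subset_Ici_self)) h1
      exact ⟨θ, hθ1.1, hθ2⟩
    -- bounded above
    have hbdd : BddAbove S := by
      refine ⟨M', fun θ hθ => ?_⟩
      by_contra h
      push_neg at h
      have := hM θ (le_trans (le_max_left M 0) h.le)
      rw [hθ.2] at this; linarith
    -- closed
    have hcl : IsClosed S := by
      have : S = Set.Ici (0:ℝ) ∩ ψ ⁻¹' {q} := by
        ext θ; simp [hS, Set.mem_setOf_eq, and_comm]
      rw [this]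
      exact hcont0.preimage_isClosed_of_isClosed isClosed_Ici isClosed_singleton
    have hmem : Φ q ∈ S := by rw [hΦ]; exact hcl.csSup_mem hne hbdd
    refine ⟨?_, hmem.2⟩
    rcases lt_or_eq_of_le hmem.1 with h | h
    · exact h
    · exfalso
      rw [← h] at hmem
      have := hmem.2
      rw [h0] at this
      linarith
  -- strict monotonicity of Φ on positive reals
  have hΦmono : ∀ q1 q2 : ℝ, 0 < q1 → q1 < q2 → Φ q1 < Φ q2 := by
    intro q1 q2 hq1 h12
    obtain ⟨hΦ1pos, hψ1⟩ := hroot q1 hq1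
    obtain ⟨hΦ2pos, hψ2⟩ := hroot q2 (hq1.trans h12)
    obtain ⟨M, hM⟩ := (htop.eventually_ge_atTop q2).exists_forall_of_atTop
    set M' : ℝ := max M (Φ q1) with hM'
    have hψM' : q2 ≤ ψ M' := hM M' (le_max_left _ _)
    have h1 : q2 ∈ Set.Icc (ψ (Φ q1)) (ψ M') := ⟨by rw [hψ1]; linarith, hψM'⟩
    obtain ⟨θ, hθ1, hθ2⟩ := intermediate_value_Icc (le_max_right M (Φ q1))
      (hcont0.mono (fun x hx => le_trans hΦ1pos.le hx.1)) h1
    have hθS : θ ∈ {θ : ℝ | 0 ≤ θ ∧ ψ θ = q2} :=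
      ⟨le_trans hΦ1pos.le hθ1.1, hθ2⟩
    have hbdd : BddAbove {θ : ℝ | 0 ≤ θ ∧ ψ θ = q2} := by
      obtain ⟨N, hN⟩ := (htop.eventually_ge_atTop (q2 + 1)).exists_forall_of_atTop
      refine ⟨max N 0, fun x hx => ?_⟩
      by_contra h
      push_neg at h
      have := hN x (le_trans (le_max_left N 0) h.le)
      rw [hx.2] at this; linarith
    have hle : Φ q1 ≤ Φ q2 := by
      calc Φ q1 ≤ θ := hθ1.1
        _ ≤ Φ q2 := by rw [hΦ]; exact le_csSup hbdd hθS
    rcases lt_or_eq_of_le hle with h | h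
    · exact h
    · exfalso; rw [h, hψ2] at hψ1; linarith
  have hc : ψ 0 = 0 := h0
  -- part (a)
  have parta : StrictMonoOn (fun q : ℝ => K * (q - ψ (-1) - β) / (Φ q + 1) - α / Φ q)
      (Set.Ioi (0:ℝ)) := by
    intro q1 hq1 q2 hq2 h12
    simp only [Set.mem_Ioi] at hq1 hq2
    obtain ⟨hx, hψ1⟩ := hroot q1 hq1
    obtain ⟨hy, hψ2⟩ := hroot q2 hq2
    have hxy : Φ q1 < Φ q2 := hΦmono q1 q2 hq1 h12
    -- slope inequality from convexity (secant through -1)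
    have hslope : (ψ (Φ q1) - ψ (-1)) / (Φ q1 - (-1)) ≤
        (ψ (Φ q2) - ψ (-1)) / (Φ q2 - (-1)) := by
      refine hconv.secant_mono (Set.self_mem_Ici)
        (by exact Set.mem_Ici.mpr (by linarith))
        (by exact Set.mem_Ici.mpr (by linarith))
        (by linarith) (by linarith) hxy.le
    rw [hψ1, hψ2] at hslope
    have hx1 : (0:ℝ) < Φ q1 + 1 := by linarith
    have hy1 : (0:ℝ) < Φ q2 + 1 := by linarith
    have hβineq : β / (Φ q2 + 1) < β / (Φ q1 + 1) :=
      div_lt_div_of_pos_left hβ hx1 (by linarith)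
    have hαineq : α / Φ q2 < α / Φ q1 :=
      div_lt_div_of_pos_left hα hx (by linarith)
    have e1 : K * (q1 - ψ (-1) - β) / (Φ q1 + 1)
        = K * ((q1 - ψ (-1)) / (Φ q1 - (-1))) - K * (β / (Φ q1 + 1)) := by
      rw [sub_neg_eq_add]; field_simp
    have e2 : K * (q2 - ψ (-1) - β) / (Φ q2 + 1)
        = K * ((q2 - ψ (-1)) / (Φ q2 - (-1))) - K * (β / (Φ q2 + 1)) := by
      rw [sub_neg_eq_add]; field_simp
    simp only
    rw [e1, e2]
    have := mul_le_mul_of_nonneg_left hslope hK.le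
    nlinarith [mul_lt_mul_of_pos_left hβineq hK]
  -- pointwise identity valid for all q > 0
  have hident : ∀ q : ℝ, 0 < q →
      K * b ^ 2 / 2
          + (α / Φ q) * (K / (α * (Φ q + 1) / (Φ q * (q - ψ (-1) - β))) - 1)
        = K * b ^ 2 / 2 + K * (q - ψ (-1) - β) / (Φ q + 1) - α / Φ q := by
    intro q hq
    obtain ⟨hΦpos, _⟩ := hroot q hq
    have h1 : (0:ℝ) < Φ q + 1 := by linarith
    rw [div_div_eq_mul_div]
    rcases eq_or_ne (q - ψ (-1) - β) 0 with h | h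
    · rw [h]; simp; ring
    · field_simp
      ring
  refine ⟨parta, fun q hq => hident q (lt_of_le_of_lt (le_max_right _ _) hq), ?_⟩
  -- part (c)
  intro q₀ hq₀
  constructor
  intro q1 hq1 q2 hq2 x hx
  simp only [Set.mem_setOf_eq, Set.mem_Ioo] at hq1 hq2 ⊢
  have hxIoo : x ∈ Set.Ioo (0:ℝ) q₀ :=
    ⟨lt_of_lt_of_le hq1.1.1 hx.1, lt_of_le_of_lt hx.2 hq2.1.2⟩
  refine ⟨hxIoo, ?_⟩
  rw [hident x hxIoo.1]
  rw [hident q1 hq1.1.1] at hq1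
  have hmono : K * (q1 - ψ (-1) - β) / (Φ q1 + 1) - α / Φ q1
      ≤ K * (x - ψ (-1) - β) / (Φ x + 1) - α / Φ x := by
    rcases eq_or_lt_of_le hx.1 with h | h
    · rw [h]
    · exact (parta (Set.mem_Ioi.mpr hq1.1.1) (Set.mem_Ioi.mpr hxIoo.1) h).le
  linarith [hq1.2]
end
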